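/- arXiv:2503.03328 — 3 statements merged into one kernel-verified Lean document; each statement's English description precedes it below -/
import Mathlib

section
/- For every dimension n ≥ 1, every x ∈ R^n, every λ ∈ R, and every ε ∈ (0,1), the energy function satisfies Φ_{n,λ}(x) ≥ (1−ε²)^{n/2} · exp(ε‖λx‖). -/
open MeasureTheory Real
open scoped RealInnerProductSpace

noncomputable section AMGFAux

variable {n : ℕ}

def rotFun (v w : EuclideanSpace ℝ (Fin n)) (θ : ℝ) (u : EuclideanSpace ℝ (Fin n)) :
    EuclideanSpace ℝ (Fin n) :=
  u + ((Real.cos θ - 1) * ⟪u, v⟫ - Real.sin θ * ⟪u, w⟫) • v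
    + (Real.sin θ * ⟪u, v⟫ + (Real.cos θ - 1) * ⟪u, w⟫) • w

variable {v w : EuclideanSpace ℝ (Fin n)} (hv : ⟪v, v⟫ = 1) (hw : ⟪w, w⟫ = 1)
  (hvw : ⟪v, w⟫ = 0)

set_option linter.unusedSectionVars false
section
include hv hw hvw

lemma rotFun_inner_v (θ : ℝ) (u : EuclideanSpace ℝ (Fin n)) :
    ⟪rotFun v w θ u, v⟫ = Real.cos θ * ⟪u, v⟫ - Real.sin θ * ⟪u, w⟫ := by
  have hwv : ⟪w, v⟫ = (0:ℝ) := by rw [real_inner_comm]; exact hvw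
  simp only [rotFun, inner_add_left, real_inner_smul_left, hv, hw, hvw, hwv]
  ring

lemma rotFun_inner_w (θ : ℝ) (u : EuclideanSpace ℝ (Fin n)) :
    ⟪rotFun v w θ u, w⟫ = Real.sin θ * ⟪u, v⟫ + Real.cos θ * ⟪u, w⟫ := by
  have hwv : ⟪w, v⟫ = (0:ℝ) := by rw [real_inner_comm]; exact hvw
  simp only [rotFun, inner_add_left, real_inner_smul_left, hv, hw, hvw, hwv]
  ring

lemma rotFun_inner_rotFun (θ : ℝ) (x y : EuclideanSpace ℝ (Fin n)) :
    ⟪rotFun v w θ x, rotFun v w θ y⟫ = ⟪x, y⟫ := by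
  have h := Real.sin_sq_add_cos_sq θ
  have hwv : ⟪w, v⟫ = (0:ℝ) := by rw [real_inner_comm]; exact hvw
  simp only [rotFun, inner_add_left, inner_add_right, real_inner_smul_left,
    real_inner_smul_right, hv, hw, hvw, hwv]
  have h1 : ⟪v, y⟫ = ⟪y, v⟫ := real_inner_comm y v
  have h2 : ⟪w, y⟫ = ⟪y, w⟫ := real_inner_comm y w
  rw [h1, h2]
  linear_combination ((⟪x, v⟫ : ℝ) * ⟪y, v⟫ + (⟪x, w⟫ : ℝ) * ⟪y, w⟫) * h

lemma rotFun_rotFun (θ : ℝ) (u : EuclideanSpace ℝ (Fin n)) :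
    rotFun v w (-θ) (rotFun v w θ u) = u := by
  have h := Real.sin_sq_add_cos_sq θ
  conv_lhs => rw [show rotFun v w (-θ) (rotFun v w θ u)
    = rotFun v w θ u + ((Real.cos (-θ) - 1) * ⟪rotFun v w θ u, v⟫
        - Real.sin (-θ) * ⟪rotFun v w θ u, w⟫) • v
      + (Real.sin (-θ) * ⟪rotFun v w θ u, v⟫
        + (Real.cos (-θ) - 1) * ⟪rotFun v w θ u, w⟫) • w from rfl]
  rw [rotFun_inner_v hv hw hvw, rotFun_inner_w hv hw hvw]
  simp only [rotFun, Real.cos_neg, Real.sin_neg]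
  match_scalars
  · ring
  · linear_combination (⟪u, v⟫ : ℝ) * h
  · linear_combination (⟪u, w⟫ : ℝ) * h

omit hv hw hvw in
lemma rotFun_add (θ : ℝ) (x y : EuclideanSpace ℝ (Fin n)) :
    rotFun v w θ (x + y) = rotFun v w θ x + rotFun v w θ y := by
  simp only [rotFun, inner_add_left]
  match_scalars <;> ring

omit hv hw hvw in
lemma rotFun_smul (θ : ℝ) (c : ℝ) (x : EuclideanSpace ℝ (Fin n)) :
    rotFun v w θ (c • x) = c • rotFun v w θ x := by
  simp only [rotFun, real_inner_smul_left, smul_add]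
  match_scalars <;> ring

include hv hw hvw in
/-- The rotation as a linear isometry equivalence. -/
def rotIso (θ : ℝ) : EuclideanSpace ℝ (Fin n) ≃ₗᵢ[ℝ] EuclideanSpace ℝ (Fin n) :=
  LinearEquiv.isometryOfInner
    { toFun := rotFun v w θ
      map_add' := rotFun_add θ
      map_smul' := rotFun_smul θ
      invFun := rotFun v w (-θ)
      left_inv := rotFun_rotFun hv hw hvw θ
      right_inv := fun u => by
        have := rotFun_rotFun hv hw hvw (-θ) u
        rwa [neg_neg] at this }
    (rotFun_inner_rotFun hv hw hvw θ)

lemma rotIso_apply (θ : ℝ) (u : EuclideanSpace ℝ (Fin n)) :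
    rotIso hv hw hvw θ u = rotFun v w θ u := rfl

end

section MeasureSide

variable (μ : Measure (EuclideanSpace ℝ (Fin n))) [IsProbabilityMeasure μ]
  (v : EuclideanSpace ℝ (Fin n))

/-- `Sk μ v k r = ∫ ⟪u,v⟫^k e^{r⟪u,v⟫} dμ`. -/
def Sk (k : ℕ) (r : ℝ) : ℝ := ∫ u, ⟪u, v⟫ ^ k * Real.exp (r * ⟪u, v⟫) ∂μ

lemma contA : Continuous fun u : EuclideanSpace ℝ (Fin n) => (⟪u, v⟫ : ℝ) :=
  continuous_id.inner continuous_const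

lemma integrable_of_bound {f : EuclideanSpace ℝ (Fin n) → ℝ}
    (hm : AEStronglyMeasurable f μ) (C : ℝ) (h : ∀ᵐ u ∂μ, |f u| ≤ C) :
    Integrable f μ :=
  Integrable.mono' (integrable_const C) hm (by simpa using h)

variable {μ v}

lemma aeA (hsupp : ∀ᵐ ℓ ∂μ, ‖ℓ‖ = 1) (hv1 : ‖v‖ = 1) :
    ∀ᵐ u ∂μ, |(⟪u, v⟫ : ℝ)| ≤ 1 := by
  filter_upwards [hsupp] with u hu
  calc |(⟪u, v⟫ : ℝ)| ≤ ‖u‖ * ‖v‖ := abs_real_inner_le_norm u v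
  _ = 1 := by rw [hu, hv1, mul_one]

lemma integrable_pow_exp (hsupp : ∀ᵐ ℓ ∂μ, ‖ℓ‖ = 1) (hv1 : ‖v‖ = 1) (k : ℕ) (r : ℝ) :
    Integrable (fun u => (⟪u, v⟫ : ℝ) ^ k * Real.exp (r * ⟪u, v⟫)) μ := by
  apply integrable_of_bound μ
    (((contA v).pow k).mul ((continuous_const.mul (contA v)).rexp)).aestronglyMeasurable
    (Real.exp |r|)
  filter_upwards [aeA hsupp hv1] with u hA
  show |(⟪u, v⟫:ℝ) ^ k * Real.exp (r * ⟪u, v⟫)| ≤ Real.exp |r|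
  rw [abs_mul, abs_pow]
  calc |(⟪u, v⟫:ℝ)| ^ k * |Real.exp (r * ⟪u, v⟫)|
      ≤ 1 ^ k * Real.exp |r| := by
        apply mul_le_mul (pow_le_pow_left₀ (abs_nonneg _) hA k)
        · rw [abs_of_pos (Real.exp_pos _)]
          apply Real.exp_le_exp.2
          calc r * ⟪u, v⟫ ≤ |r * ⟪u, v⟫| := le_abs_self _
          _ = |r| * |(⟪u, v⟫:ℝ)| := abs_mul _ _
          _ ≤ |r| * 1 := by nlinarith [abs_nonneg r]
          _ = |r| := mul_one _
        · exact abs_nonneg _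
        · positivity
  _ = Real.exp |r| := by norm_num

lemma hasDerivAt_Sk (hsupp : ∀ᵐ ℓ ∂μ, ‖ℓ‖ = 1) (hv1 : ‖v‖ = 1) (k : ℕ) (r : ℝ) :
    HasDerivAt (Sk μ v k) (Sk μ v (k + 1) r) r := by
  have key := hasDerivAt_integral_of_dominated_loc_of_deriv_le (μ := μ)
    (F := fun t u => (⟪u, v⟫ : ℝ) ^ k * Real.exp (t * ⟪u, v⟫))
    (F' := fun t u => (⟪u, v⟫ : ℝ) ^ (k + 1) * Real.exp (t * ⟪u, v⟫))
    (x₀ := r) (bound := fun _ => Real.exp (|r| + 1)) (Metric.ball_mem_nhds _ one_pos)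
    (Filter.Eventually.of_forall fun t =>
      (((contA v).pow k).mul ((continuous_const.mul (contA v)).rexp)).aestronglyMeasurable)
    (integrable_pow_exp hsupp hv1 k r)
    (((contA v).pow (k + 1)).mul ((continuous_const.mul (contA v)).rexp)).aestronglyMeasurable
    ?_ (integrable_const _) ?_
  · exact key.2
  · filter_upwards [aeA hsupp hv1] with u hA t ht
    rw [Real.norm_eq_abs, abs_mul, abs_pow]
    have ht' : |t| ≤ |r| + 1 := by
      have := mem_ball_iff_norm.1 ht
      rw [Real.norm_eq_abs] at this
      calc |t| = |r + (t - r)| := by ring_nf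
      _ ≤ |r| + |t - r| := abs_add_le _ _
      _ ≤ |r| + 1 := by linarith
    calc |(⟪u, v⟫:ℝ)| ^ (k+1) * |Real.exp (t * ⟪u, v⟫)|
        ≤ 1 ^ (k+1) * Real.exp (|r| + 1) := by
          apply mul_le_mul (pow_le_pow_left₀ (abs_nonneg _) hA _)
          · rw [abs_of_pos (Real.exp_pos _)]
            apply Real.exp_le_exp.2
            calc t * ⟪u, v⟫ ≤ |t * ⟪u, v⟫| := le_abs_self _
            _ = |t| * |(⟪u, v⟫:ℝ)| := abs_mul _ _
            _ ≤ (|r| + 1) * 1 := by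
                apply mul_le_mul ht' hA (abs_nonneg _) (by positivity)
            _ = |r| + 1 := mul_one _
          · exact abs_nonneg _
          · positivity
    _ = Real.exp (|r| + 1) := by norm_num
  · filter_upwards with u t _
    have h1 : HasDerivAt (fun t : ℝ => t * ⟪u, v⟫) ⟪u, v⟫ t := hasDerivAt_mul_const _
    have h2 := (h1.exp).const_mul ((⟪u, v⟫ : ℝ) ^ k)
    beta_reduce
    refine h2.congr_deriv ?_
    ring



lemma integral_comp_iso
    (hrot : ∀ e : EuclideanSpace ℝ (Fin n) ≃ₗᵢ[ℝ] EuclideanSpace ℝ (Fin n), μ.map e = μ)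
    (e : EuclideanSpace ℝ (Fin n) ≃ₗᵢ[ℝ] EuclideanSpace ℝ (Fin n))
    {f : EuclideanSpace ℝ (Fin n) → ℝ} (hf : AEStronglyMeasurable f μ) :
    ∫ u, f (e u) ∂μ = ∫ u, f u ∂μ := by
  conv_rhs => rw [← hrot e]
  rw [integral_map e.continuous.aemeasurable (by rwa [hrot e])]

lemma neg_reflect (hrot : ∀ e : EuclideanSpace ℝ (Fin n) ≃ₗᵢ[ℝ] EuclideanSpace ℝ (Fin n),
      μ.map e = μ) (r : ℝ) :
    ∫ u, -((⟪u, v⟫ : ℝ) * Real.exp (-(r * ⟪u, v⟫))) ∂μ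
      = ∫ u, (⟪u, v⟫ : ℝ) * Real.exp (r * ⟪u, v⟫) ∂μ := by
  have hneg := integral_comp_iso (μ := μ) hrot (LinearIsometryEquiv.neg ℝ)
    (f := fun u => (⟪u, v⟫ : ℝ) * Real.exp (r * ⟪u, v⟫))
    ((contA v).mul ((continuous_const.mul (contA v)).rexp)).aestronglyMeasurable
    |>.symm
  rw [hneg]
  apply integral_congr_ae
  filter_upwards with u
  simp only [LinearIsometryEquiv.coe_neg, inner_neg_left, mul_neg, neg_mul, neg_neg]

lemma S1_zero (hrot : ∀ e : EuclideanSpace ℝ (Fin n) ≃ₗᵢ[ℝ] EuclideanSpace ℝ (Fin n),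
      μ.map e = μ) :
    Sk μ v 1 0 = 0 := by
  have h := neg_reflect (μ := μ) (v := v) hrot 0
  simp only [zero_mul, neg_zero, Real.exp_zero, mul_one] at h
  rw [integral_neg] at h
  have h2 : Sk μ v 1 0 = ∫ u, (⟪u, v⟫:ℝ) ∂μ := by
    unfold Sk
    apply integral_congr_ae
    filter_upwards with u
    simp
  rw [h2]
  linarith

lemma S0_zero : Sk μ v 0 0 = 1 := by
  unfold Sk
  have : ∀ u : EuclideanSpace ℝ (Fin n), (⟪u, v⟫:ℝ) ^ 0 * Real.exp (0 * ⟪u, v⟫) = 1 := by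
    intro u; simp
  rw [integral_congr_ae (Filter.Eventually.of_forall this)]
  simp

lemma S0_pos (hsupp : ∀ᵐ ℓ ∂μ, ‖ℓ‖ = 1) (hv1 : ‖v‖ = 1) (r : ℝ) :
    Real.exp (-|r|) ≤ Sk μ v 0 r := by
  have h1 : ∫ u, Real.exp (-|r|) ∂μ = Real.exp (-|r|) := by
    rw [integral_const]
    simp
  rw [← h1]
  apply integral_mono_ae (integrable_const _) (integrable_pow_exp hsupp hv1 0 r)
  filter_upwards [aeA hsupp hv1] with u hA
  simp only [pow_zero, one_mul]
  apply Real.exp_le_exp.2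
  have : |r * ⟪u, v⟫| ≤ |r| := by
    rw [abs_mul]; nlinarith [abs_nonneg r]
  linarith [neg_abs_le (r * (⟪u, v⟫:ℝ))]

lemma S_gap (hsupp : ∀ᵐ ℓ ∂μ, ‖ℓ‖ = 1)
    (hrot : ∀ e : EuclideanSpace ℝ (Fin n) ≃ₗᵢ[ℝ] EuclideanSpace ℝ (Fin n), μ.map e = μ)
    (hv1 : ‖v‖ = 1) (r : ℝ) (hr : 0 ≤ r) :
    Real.exp (-r) ≤ Sk μ v 0 r - Sk μ v 1 r := by
  have hint0 := integrable_pow_exp hsupp hv1 0 r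
  have hint1 := integrable_pow_exp hsupp hv1 1 r
  have hsub : Sk μ v 0 r - Sk μ v 1 r
      = ∫ u, ((⟪u, v⟫:ℝ) ^ 0 * Real.exp (r * ⟪u, v⟫)
          - (⟪u, v⟫:ℝ) ^ 1 * Real.exp (r * ⟪u, v⟫)) ∂μ := (integral_sub hint0 hint1).symm
  rw [hsub]
  have hmean : ∫ u, Real.exp (-r) * (1 - (⟪u, v⟫:ℝ)) ∂μ = Real.exp (-r) := by
    rw [integral_const_mul]
    have h1 : ∫ u, (1 - (⟪u, v⟫:ℝ)) ∂μ
        = ∫ u, (1:ℝ) ∂μ - ∫ u, (⟪u, v⟫:ℝ) ∂μ := integral_sub (integrable_const _)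
          (by simpa using integrable_pow_exp hsupp hv1 1 0)
    have h2 : Sk μ v 1 0 = ∫ u, (⟪u, v⟫:ℝ) ∂μ := by
      unfold Sk
      apply integral_congr_ae
      filter_upwards with u
      simp
    rw [h1, ← h2, S1_zero hrot]
    simp
  rw [← hmean]
  apply integral_mono_ae
  · exact (((integrable_const (1:ℝ)).sub
      (by simpa using integrable_pow_exp hsupp hv1 1 0))).const_mul _
  · exact hint0.sub hint1
  · filter_upwards [aeA hsupp hv1] with u hA
    have hA1 : -(1:ℝ) ≤ ⟪u, v⟫ := neg_le_of_abs_le hA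
    have hA2 : (⟪u,v⟫:ℝ) ≤ 1 := le_of_abs_le hA
    have hexp : Real.exp (-r) ≤ Real.exp (r * ⟪u, v⟫) := by
      apply Real.exp_le_exp.2; nlinarith
    have e1 : (⟪u,v⟫:ℝ) ^ 0 * Real.exp (r * ⟪u, v⟫) - (⟪u,v⟫:ℝ) ^ 1 * Real.exp (r * ⟪u, v⟫)
        = (1 - (⟪u,v⟫:ℝ)) * Real.exp (r * ⟪u, v⟫) := by ring
    rw [e1]
    nlinarith [Real.exp_pos (r * (⟪u, v⟫:ℝ))]

lemma S1_lb (hsupp : ∀ᵐ ℓ ∂μ, ‖ℓ‖ = 1)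
    (hrot : ∀ e : EuclideanSpace ℝ (Fin n) ≃ₗᵢ[ℝ] EuclideanSpace ℝ (Fin n), μ.map e = μ)
    (hv1 : ‖v‖ = 1) (r : ℝ) (hr : 0 ≤ r) :
    r * Sk μ v 2 0 ≤ Sk μ v 1 r := by
  have hint1 : Integrable (fun u => (⟪u, v⟫:ℝ) * Real.exp (r * ⟪u, v⟫)) μ := by
    simpa using integrable_pow_exp hsupp hv1 1 r
  have hintm : Integrable (fun u => (⟪u, v⟫:ℝ) * Real.exp (-(r * ⟪u, v⟫))) μ := by
    have := integrable_pow_exp hsupp hv1 1 (-r)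
    simp only [pow_one, neg_mul] at this
    exact this
  have hneg := neg_reflect (μ := μ) (v := v) hrot r
  have hS1 : Sk μ v 1 r = ∫ u, (⟪u, v⟫:ℝ) * Real.exp (r * ⟪u, v⟫) ∂μ := by
    unfold Sk
    apply integral_congr_ae
    filter_upwards with u
    simp
  have hsinh : Sk μ v 1 r = ∫ u, (⟪u, v⟫:ℝ) * Real.sinh (r * ⟪u, v⟫) ∂μ := by
    have e2 : ∫ u, (⟪u, v⟫:ℝ) * Real.sinh (r * ⟪u, v⟫) ∂μ
        = (∫ u, ((⟪u, v⟫:ℝ) * Real.exp (r * ⟪u, v⟫)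
            + -((⟪u, v⟫:ℝ) * Real.exp (-(r * ⟪u, v⟫)))) ∂μ) / 2 := by
      rw [← integral_div]
      apply integral_congr_ae
      filter_upwards with u
      rw [Real.sinh_eq]
      ring
    have hintm' : Integrable (fun u => -((⟪u, v⟫:ℝ) * Real.exp (-(r * ⟪u, v⟫)))) μ :=
      hintm.neg
    rw [hS1, e2, integral_add hint1 hintm', hneg]
    ring
  rw [hsinh]
  have h2 : r * Sk μ v 2 0 = ∫ u, r * (⟪u, v⟫:ℝ) ^ 2 ∂μ := by
    rw [integral_const_mul]
    unfold Sk
    congr 1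
    apply integral_congr_ae
    filter_upwards with u
    simp
  rw [h2]
  apply integral_mono_ae
  · exact (by simpa using integrable_pow_exp hsupp hv1 2 0 : Integrable
      (fun u => (⟪u, v⟫:ℝ) ^ 2) μ).const_mul r
  · apply Integrable.congr ((hint1.sub hintm).div_const 2)
    filter_upwards with u
    rw [Real.sinh_eq]
    simp only [Pi.sub_apply]
    ring
  · filter_upwards with u
    have key : ∀ t : ℝ, r * t ^ 2 ≤ t * Real.sinh (r * t) := by
      intro t
      rcases le_or_gt 0 t with ht | ht
      · have : r * t ≤ Real.sinh (r * t) := Real.self_le_sinh_iff.2 (by positivity)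
        nlinarith
      · have h1 : Real.sinh (r * t) ≤ r * t := by
          have h0 : (0:ℝ) ≤ -(r*t) := by nlinarith
          have := Real.self_le_sinh_iff.2 h0
          rw [Real.sinh_neg] at this
          linarith
        nlinarith
    exact key _

lemma S_CS (hsupp : ∀ᵐ ℓ ∂μ, ‖ℓ‖ = 1) (hv1 : ‖v‖ = 1) (r : ℝ) :
    (Sk μ v 1 r) ^ 2 ≤ Sk μ v 0 r * Sk μ v 2 r := by
  have hint0 : Integrable (fun u => Real.exp (r * ⟪u, v⟫)) μ := by
    simpa using integrable_pow_exp hsupp hv1 0 r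
  have hint1 : Integrable (fun u => (⟪u, v⟫:ℝ) * Real.exp (r * ⟪u, v⟫)) μ := by
    simpa using integrable_pow_exp hsupp hv1 1 r
  have hint2 : Integrable (fun u => (⟪u, v⟫:ℝ) ^ 2 * Real.exp (r * ⟪u, v⟫)) μ :=
    integrable_pow_exp hsupp hv1 2 r
  have key : ∀ t : ℝ, 0 ≤ Sk μ v 0 r * (t * t) + (2 * Sk μ v 1 r) * t + Sk μ v 2 r := by
    intro t
    have expand : ∫ u, ((⟪u, v⟫:ℝ) + t) ^ 2 * Real.exp (r * ⟪u, v⟫) ∂μ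
        = Sk μ v 0 r * (t * t) + (2 * Sk μ v 1 r) * t + Sk μ v 2 r := by
      have e1 : ∫ u, ((⟪u, v⟫:ℝ) + t) ^ 2 * Real.exp (r * ⟪u, v⟫) ∂μ
          = ∫ u, ((⟪u, v⟫:ℝ) ^ 2 * Real.exp (r * ⟪u, v⟫)
              + (2 * t) * ((⟪u, v⟫:ℝ) * Real.exp (r * ⟪u, v⟫))
              + (t * t) * Real.exp (r * ⟪u, v⟫)) ∂μ := by
        apply integral_congr_ae
        filter_upwards with u
        ring
      have ha1 : Integrable (fun u => (⟪u, v⟫:ℝ) ^ 2 * Real.exp (r * ⟪u, v⟫)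
          + (2 * t) * ((⟪u, v⟫:ℝ) * Real.exp (r * ⟪u, v⟫))) μ := by
        exact hint2.add (hint1.const_mul _)
      have ha2 : Integrable (fun u => (t * t) * Real.exp (r * ⟪u, v⟫)) μ := by
        exact hint0.const_mul _
      rw [e1, integral_add ha1 ha2, integral_add hint2 (hint1.const_mul _),
        integral_const_mul, integral_const_mul]
      have u0 : Sk μ v 0 r = ∫ u, Real.exp (r * ⟪u, v⟫) ∂μ := by
        unfold Sk; apply integral_congr_ae; filter_upwards with u; simp
      have u1 : Sk μ v 1 r = ∫ u, (⟪u, v⟫:ℝ) * Real.exp (r * ⟪u, v⟫) ∂μ := by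
        unfold Sk; apply integral_congr_ae; filter_upwards with u; simp
      have u2 : Sk μ v 2 r = ∫ u, (⟪u, v⟫:ℝ) ^ 2 * Real.exp (r * ⟪u, v⟫) ∂μ := rfl
      rw [u0, u1, u2]
      ring
    rw [← expand]
    apply integral_nonneg_of_ae
    filter_upwards with u
    positivity
  have hd := discrim_le_zero key
  rw [discrim] at hd
  nlinarith [hd]

lemma parseval_aux {ι : Type*} [Fintype ι]
    (b : OrthonormalBasis ι ℝ ((ℝ ∙ v)ᗮ)) (hv1 : ‖v‖ = 1)
    (u : EuclideanSpace ℝ (Fin n)) (hu : ‖u‖ = 1) :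
    ∑ i, (⟪u, ((b i : (ℝ ∙ v)ᗮ) : EuclideanSpace ℝ (Fin n))⟫ : ℝ) ^ 2
      = 1 - (⟪u, v⟫ : ℝ) ^ 2 := by
  have hvv : (⟪v, v⟫ : ℝ) = 1 := by
    rw [real_inner_self_eq_norm_sq, hv1]; norm_num
  have huu : (⟪u, u⟫ : ℝ) = 1 := by
    rw [real_inner_self_eq_norm_sq, hu]; norm_num
  set c : ℝ := ⟪u, v⟫ with hc
  set q : EuclideanSpace ℝ (Fin n) := u - c • v with hqdef
  have hqK : q ∈ (ℝ ∙ v)ᗮ := by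
    rw [Submodule.mem_orthogonal_singleton_iff_inner_right]
    rw [hqdef, inner_sub_right, real_inner_smul_right, hvv, real_inner_comm]
    ring
  have hWK : ∀ i, ((b i : (ℝ ∙ v)ᗮ) : EuclideanSpace ℝ (Fin n)) ∈ (ℝ ∙ v)ᗮ := fun i =>
    (b i).2
  have hvW : ∀ i, (⟪v, ((b i : (ℝ ∙ v)ᗮ) : EuclideanSpace ℝ (Fin n))⟫ : ℝ) = 0 := fun i =>
    Submodule.mem_orthogonal_singleton_iff_inner_right.1 (hWK i)
  have hqW : ∀ i, (⟪q, ((b i : (ℝ ∙ v)ᗮ) : EuclideanSpace ℝ (Fin n))⟫ : ℝ)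
      = ⟪u, ((b i : (ℝ ∙ v)ᗮ) : EuclideanSpace ℝ (Fin n))⟫ := by
    intro i
    rw [hqdef, inner_sub_left, real_inner_smul_left, hvW i]
    ring
  have hpars := b.sum_inner_mul_inner (⟨q, hqK⟩ : (ℝ ∙ v)ᗮ) (⟨q, hqK⟩ : (ℝ ∙ v)ᗮ)
  simp only [Submodule.coe_inner] at hpars
  have hpars' : ∑ i, (⟪q, ((b i : (ℝ ∙ v)ᗮ) : EuclideanSpace ℝ (Fin n))⟫ : ℝ) ^ 2
      = ⟪q, q⟫ := by
    rw [← hpars]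
    apply Finset.sum_congr rfl
    intro i _
    rw [real_inner_comm ((b i : (ℝ ∙ v)ᗮ) : EuclideanSpace ℝ (Fin n)) q]
    ring
  have hqq : (⟪q, q⟫ : ℝ) = 1 - c ^ 2 := by
    rw [hqdef, inner_sub_left, inner_sub_right, inner_sub_right, real_inner_smul_left,
      real_inner_smul_left, real_inner_smul_right, real_inner_smul_right, hvv, huu,
      real_inner_comm u v, ← hc]
    ring
  calc ∑ i, (⟪u, ((b i : (ℝ ∙ v)ᗮ) : EuclideanSpace ℝ (Fin n))⟫ : ℝ) ^ 2
      = ∑ i, (⟪q, ((b i : (ℝ ∙ v)ᗮ) : EuclideanSpace ℝ (Fin n))⟫ : ℝ) ^ 2 := by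
        apply Finset.sum_congr rfl; intro i _; rw [hqW i]
  _ = ⟪q, q⟫ := hpars'
  _ = 1 - c ^ 2 := hqq


lemma exp_arg_bound {a b : ℝ} (ha : |a| ≤ 1) (hb : |b| ≤ 1) (r θ : ℝ) :
    Real.exp (r * (Real.cos θ * a - Real.sin θ * b)) ≤ Real.exp (2 * |r|) := by
  apply Real.exp_le_exp.2
  have h1 : |Real.cos θ * a - Real.sin θ * b| ≤ 2 := by
    calc |Real.cos θ * a - Real.sin θ * b| ≤ |Real.cos θ * a| + |Real.sin θ * b| :=
          abs_sub _ _
    _ = |Real.cos θ| * |a| + |Real.sin θ| * |b| := by rw [abs_mul, abs_mul]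
    _ ≤ 1 * 1 + 1 * 1 := by
        have := Real.abs_cos_le_one θ
        have := Real.abs_sin_le_one θ
        have := abs_nonneg (Real.cos θ)
        have := abs_nonneg (Real.sin θ)
        nlinarith
    _ = 2 := by norm_num
  calc r * (Real.cos θ * a - Real.sin θ * b) ≤ |r * (Real.cos θ * a - Real.sin θ * b)| :=
        le_abs_self _
  _ = |r| * |Real.cos θ * a - Real.sin θ * b| := abs_mul _ _
  _ ≤ |r| * 2 := by nlinarith [abs_nonneg r]
  _ = 2 * |r| := by ring

lemma rot_identity (hsupp : ∀ᵐ ℓ ∂μ, ‖ℓ‖ = 1)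
    (hrot : ∀ e : EuclideanSpace ℝ (Fin n) ≃ₗᵢ[ℝ] EuclideanSpace ℝ (Fin n), μ.map e = μ)
    (hv1 : ‖v‖ = 1) {w : EuclideanSpace ℝ (Fin n)} (hw1 : ‖w‖ = 1)
    (hvw : (⟪v, w⟫ : ℝ) = 0) (r : ℝ) :
    r ^ 2 * ∫ u, (⟪u, w⟫ : ℝ) ^ 2 * Real.exp (r * ⟪u, v⟫) ∂μ = r * Sk μ v 1 r := by
  have hv' : (⟪v, v⟫ : ℝ) = 1 := by rw [real_inner_self_eq_norm_sq, hv1]; norm_num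
  have hw' : (⟪w, w⟫ : ℝ) = 1 := by rw [real_inner_self_eq_norm_sq, hw1]; norm_num
  set Φ : ℝ → ℝ := fun θ => ∫ u,
    Real.exp (r * (Real.cos θ * ⟪u, v⟫ - Real.sin θ * ⟪u, w⟫)) ∂μ with hΦdef
  set Φ₁ : ℝ → ℝ := fun θ => ∫ u,
    (r * (-Real.sin θ * ⟪u, v⟫ - Real.cos θ * ⟪u, w⟫))
      * Real.exp (r * (Real.cos θ * ⟪u, v⟫ - Real.sin θ * ⟪u, w⟫)) ∂μ with hΦ₁def
  -- measurability of the three integrand families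
  have contF : ∀ θ, Continuous fun u : EuclideanSpace ℝ (Fin n) =>
      Real.exp (r * (Real.cos θ * ⟪u, v⟫ - Real.sin θ * ⟪u, w⟫)) := fun θ =>
    (continuous_const.mul ((continuous_const.mul (contA v)).sub
      (continuous_const.mul (contA w)))).rexp
  have contP : ∀ θ, Continuous fun u : EuclideanSpace ℝ (Fin n) =>
      (r * (-Real.sin θ * ⟪u, v⟫ - Real.cos θ * ⟪u, w⟫)) := fun θ =>
    continuous_const.mul ((continuous_const.mul (contA v)).sub
      (continuous_const.mul (contA w)))
  have contG : ∀ θ, Continuous fun u : EuclideanSpace ℝ (Fin n) =>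
      (r * (-Real.sin θ * ⟪u, v⟫ - Real.cos θ * ⟪u, w⟫))
        * Real.exp (r * (Real.cos θ * ⟪u, v⟫ - Real.sin θ * ⟪u, w⟫)) := fun θ =>
    (contP θ).mul (contF θ)
  -- Step 1 : Φ is constant
  have hΦconst : ∀ θ, Φ θ = Φ 0 := by
    intro θ
    have hiso := integral_comp_iso (μ := μ) hrot (rotIso hv' hw' hvw θ)
      (f := fun y => Real.exp (r * ⟪y, v⟫))
      ((continuous_const.mul (contA v)).rexp).aestronglyMeasurable
    have hl : ∫ u, Real.exp (r * ⟪(rotIso hv' hw' hvw θ) u, v⟫) ∂μ = Φ θ := by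
      apply integral_congr_ae
      filter_upwards with u
      rw [rotIso_apply, rotFun_inner_v hv' hw' hvw]
    have hr0 : ∫ u, Real.exp (r * ⟪u, v⟫) ∂μ = Φ 0 := by
      apply integral_congr_ae
      filter_upwards with u
      simp
    rw [← hl, ← hr0]
    exact hiso
  -- Step 2 : derivative of Φ
  have dΦ : ∀ θ, HasDerivAt Φ (Φ₁ θ) θ := by
    intro θ
    have key := hasDerivAt_integral_of_dominated_loc_of_deriv_le (μ := μ)
      (x₀ := θ)
      (F := fun t u => Real.exp (r * (Real.cos t * ⟪u, v⟫ - Real.sin t * ⟪u, w⟫)))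
      (F' := fun t u => (r * (-Real.sin t * ⟪u, v⟫ - Real.cos t * ⟪u, w⟫))
        * Real.exp (r * (Real.cos t * ⟪u, v⟫ - Real.sin t * ⟪u, w⟫)))
      (bound := fun _ => 2 * |r| * Real.exp (2 * |r|)) (Metric.ball_mem_nhds _ one_pos)
      (Filter.Eventually.of_forall fun t => (contF t).aestronglyMeasurable)
      (integrable_of_bound μ (contF θ).aestronglyMeasurable (Real.exp (2 * |r|)) ?_)
      ((contG θ).aestronglyMeasurable) ?_ (integrable_const _) ?_
    · exact key.2
    · filter_upwards [aeA hsupp hv1, aeA hsupp hw1] with u hA hB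
      rw [abs_of_pos (Real.exp_pos _)]
      exact exp_arg_bound hA hB r θ
    · filter_upwards [aeA hsupp hv1, aeA hsupp hw1] with u hA hB t _
      rw [Real.norm_eq_abs, abs_mul]
      have h1 : |r * (-Real.sin t * ⟪u, v⟫ - Real.cos t * ⟪u, w⟫)| ≤ 2 * |r| := by
        rw [abs_mul]
        have h2 : |(-Real.sin t * ⟪u, v⟫ - Real.cos t * ⟪u, w⟫ : ℝ)| ≤ 2 := by
          calc |(-Real.sin t * ⟪u, v⟫ - Real.cos t * ⟪u, w⟫ : ℝ)|
              ≤ |(-Real.sin t * ⟪u, v⟫ : ℝ)| + |(Real.cos t * ⟪u, w⟫ : ℝ)| := abs_sub _ _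
          _ = |Real.sin t| * |(⟪u, v⟫ : ℝ)| + |Real.cos t| * |(⟪u, w⟫ : ℝ)| := by
              rw [abs_mul, abs_mul, abs_neg]
          _ ≤ 1 * 1 + 1 * 1 := by
              have := Real.abs_cos_le_one t
              have := Real.abs_sin_le_one t
              have := abs_nonneg (Real.sin t)
              have := abs_nonneg (Real.cos t)
              have := abs_nonneg (⟪u, v⟫ : ℝ)
              have := abs_nonneg (⟪u, w⟫ : ℝ)
              nlinarith
          _ = 2 := by norm_num
        nlinarith [abs_nonneg r]
      have h3 : |Real.exp (r * (Real.cos t * ⟪u, v⟫ - Real.sin t * ⟪u, w⟫))|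
          ≤ Real.exp (2 * |r|) := by
        rw [abs_of_pos (Real.exp_pos _)]
        exact exp_arg_bound hA hB r t
      have := mul_le_mul h1 h3 (abs_nonneg _) (by positivity)
      linarith
    · filter_upwards with u t _
      have h1 : HasDerivAt (fun s => r * (Real.cos s * ⟪u, v⟫ - Real.sin s * ⟪u, w⟫))
          (r * (-Real.sin t * ⟪u, v⟫ - Real.cos t * ⟪u, w⟫)) t := by
        have hc := (Real.hasDerivAt_cos t).mul_const (⟪u, v⟫ : ℝ)
        have hs := (Real.hasDerivAt_sin t).mul_const (⟪u, w⟫ : ℝ)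
        have := (hc.sub hs).const_mul r
        simp only [Pi.sub_apply] at this
        refine this.congr_deriv ?_; ring
      have h2 := h1.exp
      beta_reduce
      refine h2.congr_deriv ?_
      ring
  -- Step 3 : Φ₁ vanishes
  have hΦ₁zero : ∀ θ, Φ₁ θ = 0 := by
    intro θ
    have hconst : HasDerivAt Φ 0 θ := by
      have h := hasDerivAt_const θ (Φ 0)
      apply HasDerivAt.congr_of_eventuallyEq h
      filter_upwards with t
      exact hΦconst t
    exact (dΦ θ).unique hconst
  -- Step 4 : derivative of Φ₁ at 0
  have dΦ₁ : HasDerivAt Φ₁ (∫ u,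
      (r * (-Real.cos 0 * ⟪u, v⟫ + Real.sin 0 * ⟪u, w⟫)
        + (r * (-Real.sin 0 * ⟪u, v⟫ - Real.cos 0 * ⟪u, w⟫)) ^ 2)
        * Real.exp (r * (Real.cos 0 * ⟪u, v⟫ - Real.sin 0 * ⟪u, w⟫)) ∂μ) 0 := by
    have key := hasDerivAt_integral_of_dominated_loc_of_deriv_le (μ := μ)
      (x₀ := (0:ℝ))
      (F := fun t u => (r * (-Real.sin t * ⟪u, v⟫ - Real.cos t * ⟪u, w⟫))
        * Real.exp (r * (Real.cos t * ⟪u, v⟫ - Real.sin t * ⟪u, w⟫)))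
      (F' := fun t u => (r * (-Real.cos t * ⟪u, v⟫ + Real.sin t * ⟪u, w⟫)
        + (r * (-Real.sin t * ⟪u, v⟫ - Real.cos t * ⟪u, w⟫)) ^ 2)
        * Real.exp (r * (Real.cos t * ⟪u, v⟫ - Real.sin t * ⟪u, w⟫)))
      (bound := fun _ => (2 * |r| + 4 * r ^ 2) * Real.exp (2 * |r|)) (Metric.ball_mem_nhds _ one_pos)
      (Filter.Eventually.of_forall fun t => (contG t).aestronglyMeasurable)
      (integrable_of_bound μ (contG 0).aestronglyMeasurable (2 * |r| * Real.exp (2 * |r|)) ?_)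
      ((((continuous_const.mul ((continuous_const.mul (contA v)).add
          (continuous_const.mul (contA w)))).add ((contP 0).pow 2)).mul
          (contF 0)).aestronglyMeasurable) ?_ (integrable_const _) ?_
    · exact key.2
    · filter_upwards [aeA hsupp hv1, aeA hsupp hw1] with u hA hB
      rw [abs_mul]
      have h1 : |r * (-Real.sin 0 * ⟪u, v⟫ - Real.cos 0 * ⟪u, w⟫)| ≤ 2 * |r| := by
        rw [abs_mul]
        have h2 : |(-Real.sin 0 * ⟪u, v⟫ - Real.cos 0 * ⟪u, w⟫ : ℝ)| ≤ 2 := by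
          simp only [Real.sin_zero, Real.cos_zero, neg_zero, zero_mul, one_mul, zero_sub,
            abs_neg]
          linarith
        nlinarith [abs_nonneg r]
      have h3 : |Real.exp (r * (Real.cos 0 * ⟪u, v⟫ - Real.sin 0 * ⟪u, w⟫))|
          ≤ Real.exp (2 * |r|) := by
        rw [abs_of_pos (Real.exp_pos _)]
        exact exp_arg_bound hA hB r 0
      have := mul_le_mul h1 h3 (abs_nonneg _) (by positivity)
      linarith
    · filter_upwards [aeA hsupp hv1, aeA hsupp hw1] with u hA hB t _
      rw [Real.norm_eq_abs, abs_mul]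
      have habs2 : ∀ s : ℝ, |(-Real.sin s * ⟪u, v⟫ - Real.cos s * ⟪u, w⟫ : ℝ)| ≤ 2 := by
        intro s
        calc |(-Real.sin s * ⟪u, v⟫ - Real.cos s * ⟪u, w⟫ : ℝ)|
            ≤ |(-Real.sin s * ⟪u, v⟫ : ℝ)| + |(Real.cos s * ⟪u, w⟫ : ℝ)| := abs_sub _ _
        _ = |Real.sin s| * |(⟪u, v⟫ : ℝ)| + |Real.cos s| * |(⟪u, w⟫ : ℝ)| := by
            rw [abs_mul, abs_mul, abs_neg]
        _ ≤ 1 * 1 + 1 * 1 := by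
            have := Real.abs_cos_le_one s
            have := Real.abs_sin_le_one s
            have := abs_nonneg (Real.sin s)
            have := abs_nonneg (Real.cos s)
            have := abs_nonneg (⟪u, v⟫ : ℝ)
            have := abs_nonneg (⟪u, w⟫ : ℝ)
            nlinarith
        _ = 2 := by norm_num
      have habs2' : |(-Real.cos t * ⟪u, v⟫ + Real.sin t * ⟪u, w⟫ : ℝ)| ≤ 2 := by
        calc |(-Real.cos t * ⟪u, v⟫ + Real.sin t * ⟪u, w⟫ : ℝ)|
            ≤ |(-Real.cos t * ⟪u, v⟫ : ℝ)| + |(Real.sin t * ⟪u, w⟫ : ℝ)| := abs_add_le _ _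
        _ = |Real.cos t| * |(⟪u, v⟫ : ℝ)| + |Real.sin t| * |(⟪u, w⟫ : ℝ)| := by
            rw [abs_mul, abs_mul, abs_neg]
        _ ≤ 1 * 1 + 1 * 1 := by
            have := Real.abs_cos_le_one t
            have := Real.abs_sin_le_one t
            have := abs_nonneg (Real.sin t)
            have := abs_nonneg (Real.cos t)
            have := abs_nonneg (⟪u, v⟫ : ℝ)
            have := abs_nonneg (⟪u, w⟫ : ℝ)
            nlinarith
        _ = 2 := by norm_num
      have h1 : |r * (-Real.cos t * ⟪u, v⟫ + Real.sin t * ⟪u, w⟫)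
          + (r * (-Real.sin t * ⟪u, v⟫ - Real.cos t * ⟪u, w⟫)) ^ 2| ≤ 2 * |r| + 4 * r ^ 2 := by
        calc |r * (-Real.cos t * ⟪u, v⟫ + Real.sin t * ⟪u, w⟫)
            + (r * (-Real.sin t * ⟪u, v⟫ - Real.cos t * ⟪u, w⟫)) ^ 2|
            ≤ |r * (-Real.cos t * ⟪u, v⟫ + Real.sin t * ⟪u, w⟫)|
              + |(r * (-Real.sin t * ⟪u, v⟫ - Real.cos t * ⟪u, w⟫)) ^ 2| := abs_add_le _ _
        _ ≤ 2 * |r| + 4 * r ^ 2 := by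
            have e1 : |r * (-Real.cos t * ⟪u, v⟫ + Real.sin t * ⟪u, w⟫)|
                = |r| * |(-Real.cos t * ⟪u, v⟫ + Real.sin t * ⟪u, w⟫ : ℝ)| := abs_mul _ _
            have e2 : |(r * (-Real.sin t * ⟪u, v⟫ - Real.cos t * ⟪u, w⟫)) ^ 2|
                = (|r| * |(-Real.sin t * ⟪u, v⟫ - Real.cos t * ⟪u, w⟫ : ℝ)|) ^ 2 := by
              rw [abs_pow, abs_mul]
            rw [e1, e2]
            have hb2 := habs2 t
            have h4 : |r| * |(-Real.sin t * ⟪u, v⟫ - Real.cos t * ⟪u, w⟫ : ℝ)| ≤ |r| * 2 := by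
              nlinarith [abs_nonneg r]
            have h5 : (|r| * |(-Real.sin t * ⟪u, v⟫ - Real.cos t * ⟪u, w⟫ : ℝ)|) ^ 2
                ≤ (|r| * 2) ^ 2 := by
              apply pow_le_pow_left₀ (by positivity) h4
            have h6 : (|r| * 2) ^ 2 = 4 * r ^ 2 := by
              rw [mul_pow, sq_abs]; ring
            nlinarith [abs_nonneg r, habs2' , abs_nonneg ((-Real.cos t * ⟪u, v⟫ + Real.sin t * ⟪u, w⟫ : ℝ))]
      have h3 : |Real.exp (r * (Real.cos t * ⟪u, v⟫ - Real.sin t * ⟪u, w⟫))|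
          ≤ Real.exp (2 * |r|) := by
        rw [abs_of_pos (Real.exp_pos _)]
        exact exp_arg_bound hA hB r t
      have := mul_le_mul h1 h3 (abs_nonneg _) (by positivity)
      linarith
    · filter_upwards with u t _
      have hH : HasDerivAt (fun s => r * (Real.cos s * ⟪u, v⟫ - Real.sin s * ⟪u, w⟫))
          (r * (-Real.sin t * ⟪u, v⟫ - Real.cos t * ⟪u, w⟫)) t := by
        have hc := (Real.hasDerivAt_cos t).mul_const (⟪u, v⟫ : ℝ)
        have hs := (Real.hasDerivAt_sin t).mul_const (⟪u, w⟫ : ℝ)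
        have := (hc.sub hs).const_mul r
        simp only [Pi.sub_apply] at this
        refine this.congr_deriv ?_; ring
      have hP : HasDerivAt (fun s => r * (-Real.sin s * ⟪u, v⟫ - Real.cos s * ⟪u, w⟫))
          (r * (-Real.cos t * ⟪u, v⟫ + Real.sin t * ⟪u, w⟫)) t := by
        have hs := (Real.hasDerivAt_sin t).mul_const (⟪u, v⟫ : ℝ)
        have hc := (Real.hasDerivAt_cos t).mul_const (⟪u, w⟫ : ℝ)
        have h0 := (hs.neg.sub hc).const_mul r
        have hfun : (fun s => r * (-(Real.sin s * ⟪u, v⟫) - Real.cos s * ⟪u, w⟫))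
            = fun s => r * (-Real.sin s * ⟪u, v⟫ - Real.cos s * ⟪u, w⟫) := by
          funext s; ring
        simp only [Pi.sub_apply, Pi.neg_apply] at h0
        rw [hfun] at h0
        refine h0.congr_deriv ?_
        ring
      have := hP.mul hH.exp
      simp only [Pi.mul_def] at this
      beta_reduce
      refine this.congr_deriv ?_
      ring
  -- Step 5 : conclude
  have hzero : (∫ u,
      (r * (-Real.cos 0 * ⟪u, v⟫ + Real.sin 0 * ⟪u, w⟫)
        + (r * (-Real.sin 0 * ⟪u, v⟫ - Real.cos 0 * ⟪u, w⟫)) ^ 2)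
        * Real.exp (r * (Real.cos 0 * ⟪u, v⟫ - Real.sin 0 * ⟪u, w⟫)) ∂μ) = 0 := by
    have hconst : HasDerivAt Φ₁ 0 0 := by
      have h := hasDerivAt_const (0:ℝ) (0:ℝ)
      apply HasDerivAt.congr_of_eventuallyEq h
      filter_upwards with t
      exact hΦ₁zero t
    exact dΦ₁.unique hconst
  have hsimp : ∫ u,
      (r * (-Real.cos 0 * ⟪u, v⟫ + Real.sin 0 * ⟪u, w⟫)
        + (r * (-Real.sin 0 * ⟪u, v⟫ - Real.cos 0 * ⟪u, w⟫)) ^ 2)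
        * Real.exp (r * (Real.cos 0 * ⟪u, v⟫ - Real.sin 0 * ⟪u, w⟫)) ∂μ
      = ∫ u, (r ^ 2 * ((⟪u, w⟫:ℝ) ^ 2 * Real.exp (r * ⟪u, v⟫))
          - r * ((⟪u, v⟫:ℝ) * Real.exp (r * ⟪u, v⟫))) ∂μ := by
    apply integral_congr_ae
    filter_upwards with u
    simp only [Real.sin_zero, Real.cos_zero]
    ring
  have hintB2 : Integrable (fun u => (⟪u, w⟫:ℝ) ^ 2 * Real.exp (r * ⟪u, v⟫)) μ := by
    apply integrable_of_bound μ (((contA w).pow 2).mul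
      ((continuous_const.mul (contA v)).rexp)).aestronglyMeasurable (Real.exp |r|)
    filter_upwards [aeA hsupp hv1, aeA hsupp hw1] with u hA hB
    show |(⟪u, w⟫:ℝ) ^ 2 * Real.exp (r * ⟪u, v⟫)| ≤ Real.exp |r|
    rw [abs_mul, abs_pow]
    have h1 : |(⟪u, w⟫:ℝ)| ^ 2 ≤ 1 := by nlinarith [abs_nonneg (⟪u, w⟫:ℝ)]
    have h2 : |Real.exp (r * ⟪u, v⟫)| ≤ Real.exp |r| := by
      rw [abs_of_pos (Real.exp_pos _)]
      apply Real.exp_le_exp.2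
      have : |r * ⟪u, v⟫| ≤ |r| := by rw [abs_mul]; nlinarith [abs_nonneg r]
      linarith [le_abs_self (r * (⟪u, v⟫:ℝ))]
    nlinarith [abs_nonneg ((⟪u, w⟫:ℝ) ^ 2), Real.exp_pos |r|, abs_nonneg (Real.exp (r * ⟪u, v⟫))]
  have hintA : Integrable (fun u => (⟪u, v⟫:ℝ) * Real.exp (r * ⟪u, v⟫)) μ := by
    simpa using integrable_pow_exp hsupp hv1 1 r
  rw [hsimp] at hzero
  rw [integral_sub (hintB2.const_mul _) (hintA.const_mul _), integral_const_mul,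
    integral_const_mul] at hzero
  have hS1 : Sk μ v 1 r = ∫ u, (⟪u, v⟫:ℝ) * Real.exp (r * ⟪u, v⟫) ∂μ := by
    unfold Sk; apply integral_congr_ae; filter_upwards with u; simp
  rw [hS1]
  linarith


lemma integrable_B2exp (hsupp : ∀ᵐ ℓ ∂μ, ‖ℓ‖ = 1) (hv1 : ‖v‖ = 1)
    {w : EuclideanSpace ℝ (Fin n)} (hw1 : ‖w‖ = 1) (r : ℝ) :
    Integrable (fun u => (⟪u, w⟫:ℝ) ^ 2 * Real.exp (r * ⟪u, v⟫)) μ := by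
  apply integrable_of_bound μ (((contA w).pow 2).mul
    ((continuous_const.mul (contA v)).rexp)).aestronglyMeasurable (Real.exp |r|)
  filter_upwards [aeA hsupp hv1, aeA hsupp hw1] with u hA hB
  show |(⟪u, w⟫:ℝ) ^ 2 * Real.exp (r * ⟪u, v⟫)| ≤ Real.exp |r|
  rw [abs_mul, abs_pow]
  have h1 : |(⟪u, w⟫:ℝ)| ^ 2 ≤ 1 := by nlinarith [abs_nonneg (⟪u, w⟫:ℝ)]
  have h2 : |Real.exp (r * ⟪u, v⟫)| ≤ Real.exp |r| := by
    rw [abs_of_pos (Real.exp_pos _)]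
    apply Real.exp_le_exp.2
    have : |r * ⟪u, v⟫| ≤ |r| := by rw [abs_mul]; nlinarith [abs_nonneg r]
    linarith [le_abs_self (r * (⟪u, v⟫:ℝ))]
  nlinarith [Real.exp_pos |r|, abs_nonneg (Real.exp (r * ⟪u, v⟫)),
    sq_nonneg (|(⟪u, w⟫:ℝ)|)]

lemma S_ODE (hn : 1 ≤ n) (hsupp : ∀ᵐ ℓ ∂μ, ‖ℓ‖ = 1)
    (hrot : ∀ e : EuclideanSpace ℝ (Fin n) ≃ₗᵢ[ℝ] EuclideanSpace ℝ (Fin n), μ.map e = μ)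
    (hv1 : ‖v‖ = 1) (r : ℝ) :
    r * Sk μ v 0 r = r * Sk μ v 2 r + ((n:ℝ) - 1) * Sk μ v 1 r := by
  have hvne : v ≠ 0 := by
    intro h
    rw [h, norm_zero] at hv1
    norm_num at hv1
  have hdim : Module.finrank ℝ (ℝ ∙ v) + (n - 1) = Module.finrank ℝ (EuclideanSpace ℝ (Fin n)) := by
    rw [finrank_span_singleton hvne, finrank_euclideanSpace_fin]
    omega
  have hKdim : Module.finrank ℝ ((ℝ ∙ v)ᗮ : Submodule ℝ (EuclideanSpace ℝ (Fin n))) = n - 1 :=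
    Submodule.finrank_add_finrank_orthogonal' hdim
  set b := stdOrthonormalBasis ℝ ((ℝ ∙ v)ᗮ : Submodule ℝ (EuclideanSpace ℝ (Fin n))) with hbdef
  have hW1 : ∀ i, ‖((b i : (ℝ ∙ v)ᗮ) : EuclideanSpace ℝ (Fin n))‖ = 1 := by
    intro i
    have := b.orthonormal.1 i
    rwa [← Submodule.norm_coe] at this
  have hvW : ∀ i, (⟪v, ((b i : (ℝ ∙ v)ᗮ) : EuclideanSpace ℝ (Fin n))⟫ : ℝ) = 0 := fun i =>
    Submodule.mem_orthogonal_singleton_iff_inner_right.1 (b i).2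
  have heach : ∀ i, r ^ 2 * ∫ u,
      (⟪u, ((b i : (ℝ ∙ v)ᗮ) : EuclideanSpace ℝ (Fin n))⟫ : ℝ) ^ 2
        * Real.exp (r * ⟪u, v⟫) ∂μ = r * Sk μ v 1 r := fun i =>
    rot_identity hsupp hrot hv1 (hW1 i) (hvW i) r
  have hsum : ∑ i, (r ^ 2 * ∫ u,
      (⟪u, ((b i : (ℝ ∙ v)ᗮ) : EuclideanSpace ℝ (Fin n))⟫ : ℝ) ^ 2
        * Real.exp (r * ⟪u, v⟫) ∂μ) = ((n:ℝ) - 1) * (r * Sk μ v 1 r) := by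
    rw [Finset.sum_congr rfl fun i _ => heach i, Finset.sum_const]
    simp only [Finset.card_univ, Fintype.card_fin, nsmul_eq_mul]
    rw [hKdim]
    congr 1
    rw [Nat.cast_sub hn]
    norm_num
  have hswap : ∑ i, (r ^ 2 * ∫ u,
      (⟪u, ((b i : (ℝ ∙ v)ᗮ) : EuclideanSpace ℝ (Fin n))⟫ : ℝ) ^ 2
        * Real.exp (r * ⟪u, v⟫) ∂μ)
      = r ^ 2 * (Sk μ v 0 r - Sk μ v 2 r) := by
    rw [← Finset.mul_sum]
    congr 1
    rw [← integral_finset_sum _ fun i _ => integrable_B2exp hsupp hv1 (hW1 i) r]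
    have hint0 : Integrable (fun u => Real.exp (r * ⟪u, v⟫)) μ := by
      simpa using integrable_pow_exp hsupp hv1 0 r
    have hint2 : Integrable (fun u => (⟪u, v⟫:ℝ) ^ 2 * Real.exp (r * ⟪u, v⟫)) μ :=
      integrable_pow_exp hsupp hv1 2 r
    have hcongr : ∫ u, (∑ i, (⟪u, ((b i : (ℝ ∙ v)ᗮ) : EuclideanSpace ℝ (Fin n))⟫ : ℝ) ^ 2
        * Real.exp (r * ⟪u, v⟫)) ∂μ
        = ∫ u, (Real.exp (r * ⟪u, v⟫) - (⟪u, v⟫:ℝ) ^ 2 * Real.exp (r * ⟪u, v⟫)) ∂μ := by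
      apply integral_congr_ae
      filter_upwards [hsupp] with u hu
      rw [← Finset.sum_mul, parseval_aux b hv1 u hu]
      ring
    rw [hcongr, integral_sub hint0 hint2]
    have u0 : Sk μ v 0 r = ∫ u, Real.exp (r * ⟪u, v⟫) ∂μ := by
      unfold Sk; apply integral_congr_ae; filter_upwards with u; simp
    rw [u0]
    rfl
  have hkey : r ^ 2 * (Sk μ v 0 r - Sk μ v 2 r) = ((n:ℝ) - 1) * (r * Sk μ v 1 r) := by
    rw [← hswap, hsum]
  rcases eq_or_ne r 0 with hr | hr
  · rw [hr]
    simp [S1_zero (μ := μ) (v := v) hrot]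
  · have hfac : r * (r * Sk μ v 0 r - (r * Sk μ v 2 r + ((n:ℝ) - 1) * Sk μ v 1 r)) = 0 := by
      nlinarith [hkey]
    have := mul_eq_zero.1 hfac
    rcases this with h | h
    · exact absurd h hr
    · linarith


end MeasureSide

section Analytic

/-- logarithmic derivative `S₁/S₀`. -/
def aF (S₀ S₁ : ℝ → ℝ) : ℝ → ℝ := fun r => S₁ r / S₀ r

def adF (S₀ S₁ S₂ : ℝ → ℝ) : ℝ → ℝ := fun r => (S₂ r * S₀ r - (S₁ r) ^ 2) / (S₀ r) ^ 2

def QF (S₀ S₁ : ℝ → ℝ) (N : ℝ) : ℝ → ℝ :=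
  fun r => r * (1 - (aF S₀ S₁ r) ^ 2) - N * aF S₀ S₁ r

def QdF (S₀ S₁ S₂ : ℝ → ℝ) (N : ℝ) : ℝ → ℝ :=
  fun r => (1 - (aF S₀ S₁ r) ^ 2) - 2 * r * aF S₀ S₁ r * adF S₀ S₁ S₂ r
    - N * adF S₀ S₁ S₂ r

def psiF (S₀ S₁ : ℝ → ℝ) (N : ℝ) : ℝ → ℝ :=
  fun r => Real.log (S₀ r) - r * aF S₀ S₁ r - (N / 2) * Real.log (1 - (aF S₀ S₁ r) ^ 2)

variable {S₀ S₁ S₂ S₃ : ℝ → ℝ} {N : ℝ}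

lemma aF_hasDeriv (hS0pos : ∀ r, 0 < S₀ r)
    (d0 : ∀ r, HasDerivAt S₀ (S₁ r) r) (d1 : ∀ r, HasDerivAt S₁ (S₂ r) r) (r : ℝ) :
    HasDerivAt (aF S₀ S₁) (adF S₀ S₁ S₂ r) r := by
  have h := (d1 r).div (d0 r) (ne_of_gt (hS0pos r))
  have he : adF S₀ S₁ S₂ r = (S₂ r * S₀ r - S₁ r * S₁ r) / S₀ r ^ 2 := by
    unfold adF; ring_nf
  rw [he]
  exact h

lemma aF_cont (hS0pos : ∀ r, 0 < S₀ r)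
    (d0 : ∀ r, HasDerivAt S₀ (S₁ r) r) (d1 : ∀ r, HasDerivAt S₁ (S₂ r) r) :
    Continuous (aF S₀ S₁) :=
  continuous_iff_continuousAt.2 fun r =>
    (aF_hasDeriv hS0pos d0 d1 r).differentiableAt.continuousAt

lemma adF_nonneg (hS0pos : ∀ r, 0 < S₀ r) (hCS : ∀ r, (S₁ r) ^ 2 ≤ S₀ r * S₂ r) (r : ℝ) :
    0 ≤ adF S₀ S₁ S₂ r := by
  unfold adF
  apply div_nonneg _ (sq_nonneg _)
  nlinarith [hCS r]

lemma aF_mono (hS0pos : ∀ r, 0 < S₀ r) (hCS : ∀ r, (S₁ r) ^ 2 ≤ S₀ r * S₂ r)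
    (d0 : ∀ r, HasDerivAt S₀ (S₁ r) r) (d1 : ∀ r, HasDerivAt S₁ (S₂ r) r) :
    Monotone (aF S₀ S₁) :=
  monotone_of_deriv_nonneg (fun r => (aF_hasDeriv hS0pos d0 d1 r).differentiableAt)
    (fun r => by
      rw [(aF_hasDeriv hS0pos d0 d1 (r := r)).deriv]
      exact adF_nonneg hS0pos hCS r)

lemma adF_ode (hS0pos : ∀ r, 0 < S₀ r)
    (hODE : ∀ r, r * S₀ r = r * S₂ r + (N - 1) * S₁ r) {r : ℝ} (hr : 0 < r) :
    adF S₀ S₁ S₂ r = 1 - (aF S₀ S₁ r) ^ 2 - (N - 1) * aF S₀ S₁ r / r := by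
  have hS0ne : S₀ r ≠ 0 := ne_of_gt (hS0pos r)
  have hrne : r ≠ 0 := ne_of_gt hr
  have hS2 : S₂ r = S₀ r - (N - 1) * S₁ r / r := by
    have h := hODE r
    field_simp
    linarith
  unfold adF aF
  rw [hS2]
  field_simp
  ring

lemma QF_hasDeriv (hS0pos : ∀ r, 0 < S₀ r)
    (d0 : ∀ r, HasDerivAt S₀ (S₁ r) r) (d1 : ∀ r, HasDerivAt S₁ (S₂ r) r) (r : ℝ) :
    HasDerivAt (QF S₀ S₁ N) (QdF S₀ S₁ S₂ N r) r := by
  have hα := aF_hasDeriv (S₂ := S₂) hS0pos d0 d1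
  have h1 : HasDerivAt (fun x => 1 - (aF S₀ S₁ x) ^ 2)
      (-(2 * aF S₀ S₁ r ^ 1 * adF S₀ S₁ S₂ r)) r := ((hα r).pow 2).const_sub 1
  have h2 := (hasDerivAt_id r).mul h1
  have h3 := h2.sub ((hα r).const_mul N)
  have he : (fun y => id y * (1 - aF S₀ S₁ y ^ 2) - N * aF S₀ S₁ y) = QF S₀ S₁ N := by
    funext y
    simp only [id_eq, QF]
  simp only [Pi.sub_def, Pi.mul_def] at h3
  rw [he] at h3
  refine h3.congr_deriv ?_
  simp only [QdF, id_eq]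
  ring

lemma QF_cont (hS0pos : ∀ r, 0 < S₀ r)
    (d0 : ∀ r, HasDerivAt S₀ (S₁ r) r) (d1 : ∀ r, HasDerivAt S₁ (S₂ r) r) :
    Continuous (QF S₀ S₁ N) :=
  continuous_iff_continuousAt.2 fun r =>
    (QF_hasDeriv (S₂ := S₂) hS0pos d0 d1 r).differentiableAt.continuousAt

lemma QdF_neg (hN : 1 ≤ N) (hS0pos : ∀ r, 0 < S₀ r)
    (hODE : ∀ r, r * S₀ r = r * S₂ r + (N - 1) * S₁ r)
    {t : ℝ} (ht : 0 < t) (ha : 0 < aF S₀ S₁ t) (ha1 : aF S₀ S₁ t < 1)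
    (hQt : 0 < QF S₀ S₁ N t) :
    QdF S₀ S₁ S₂ N t < 0 := by
  have hαdt := adF_ode (S₁ := S₁) hS0pos hODE ht
  have hQt' : N * aF S₀ S₁ t < t * (1 - (aF S₀ S₁ t) ^ 2) := by
    have := hQt
    unfold QF at this
    linarith
  have key : t * QdF S₀ S₁ S₂ N t < 0 := by
    have htne : t ≠ 0 := ne_of_gt ht
    have hexpand : t * QdF S₀ S₁ S₂ N t
        = t * (1 - (aF S₀ S₁ t) ^ 2)
          - (2 * t * aF S₀ S₁ t + N) * (t * (1 - (aF S₀ S₁ t) ^ 2) - (N - 1) * aF S₀ S₁ t) := by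
      unfold QdF
      rw [hαdt]
      field_simp
      ring
    rw [hexpand]
    have hpos2 : 0 < N - 1 + 2 * t * aF S₀ S₁ t := by nlinarith
    have hmul := mul_lt_mul_of_pos_right hQt' hpos2
    nlinarith [hmul, mul_pos ht (mul_pos ha ha), hN, ht, ha]
  nlinarith [key, ht]

lemma QF_nonpos (hN : 1 ≤ N) (hS0pos : ∀ r, 0 < S₀ r)
    (d0 : ∀ r, HasDerivAt S₀ (S₁ r) r) (d1 : ∀ r, HasDerivAt S₁ (S₂ r) r)
    (hCS : ∀ r, (S₁ r) ^ 2 ≤ S₀ r * S₂ r)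
    (hODE : ∀ r, r * S₀ r = r * S₂ r + (N - 1) * S₁ r)
    (hS10 : S₁ 0 = 0)
    (hapos : ∀ r, 0 < r → 0 < aF S₀ S₁ r)
    (halt1 : ∀ r, 0 ≤ r → aF S₀ S₁ r < 1)
    {r₁ : ℝ} (hr₁ : 0 ≤ r₁) :
    QF S₀ S₁ N r₁ ≤ 0 := by
  have hQ0 : QF S₀ S₁ N 0 = 0 := by
    unfold QF aF
    simp [hS10]
  have hQcont := QF_cont (S₂ := S₂) (N := N) hS0pos d0 d1
  by_contra hcon
  push_neg at hcon
  have hr₁pos : 0 < r₁ := by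
    rcases eq_or_lt_of_le hr₁ with h | h
    · exfalso; rw [← h] at hcon; linarith
    · exact h
  set Kset : Set ℝ := {t | t ∈ Set.Icc (0:ℝ) r₁ ∧ QF S₀ S₁ N t ≤ 0} with hKdef
  have hKclosed : IsClosed Kset := by
    have hKeq : Kset = Set.Icc (0:ℝ) r₁ ∩ QF S₀ S₁ N ⁻¹' (Set.Iic 0) := by
      ext t
      simp [hKdef, Set.mem_Icc, Set.mem_Iic]
    rw [hKeq]
    exact isClosed_Icc.inter (isClosed_Iic.preimage hQcont)
  have hKne : Kset.Nonempty := ⟨0, Set.mem_Icc.2 ⟨le_refl 0, le_of_lt hr₁pos⟩, le_of_eq hQ0⟩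
  have hKbdd : BddAbove Kset := BddAbove.mono (fun t ht => ht.1) bddAbove_Icc
  set s := sSup Kset with hsdef
  have hsK : s ∈ Kset := hKclosed.csSup_mem hKne hKbdd
  have hs0 : 0 ≤ s := hsK.1.1
  have hsr₁ : s ≤ r₁ := hsK.1.2
  have hsne : s ≠ r₁ := by
    intro h
    rw [h] at hsK
    linarith [hsK.2]
  have hslt : s < r₁ := lt_of_le_of_ne hsr₁ hsne
  have hQpos : ∀ t, t ∈ Set.Ioc s r₁ → 0 < QF S₀ S₁ N t := by
    intro t ht
    by_contra hc
    push_neg at hc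
    have htK : t ∈ Kset := ⟨Set.mem_Icc.2 ⟨le_trans hs0 (le_of_lt ht.1), ht.2⟩, hc⟩
    have : t ≤ s := le_csSup hKbdd htK
    linarith [ht.1]
  have hanti : StrictAntiOn (QF S₀ S₁ N) (Set.Icc s r₁) := by
    apply strictAntiOn_of_deriv_neg (convex_Icc s r₁) hQcont.continuousOn
    intro t ht
    rw [interior_Icc] at ht
    rw [(QF_hasDeriv (S₂ := S₂) (N := N) hS0pos d0 d1 t).deriv]
    have htpos : 0 < t := lt_of_le_of_lt hs0 ht.1
    exact QdF_neg hN hS0pos hODE htpos (hapos t htpos)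
      (halt1 t (le_of_lt htpos)) (hQpos t ⟨ht.1, le_of_lt ht.2⟩)
  have hfin : QF S₀ S₁ N r₁ < QF S₀ S₁ N s := hanti (Set.left_mem_Icc.2 (le_of_lt hslt))
    (Set.right_mem_Icc.2 (le_of_lt hslt)) hslt
  linarith [hsK.2]

lemma psiF_nonneg (hN : 1 ≤ N) (hS0pos : ∀ r, 0 < S₀ r)
    (d0 : ∀ r, HasDerivAt S₀ (S₁ r) r) (d1 : ∀ r, HasDerivAt S₁ (S₂ r) r)
    (hCS : ∀ r, (S₁ r) ^ 2 ≤ S₀ r * S₂ r)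
    (hODE : ∀ r, r * S₀ r = r * S₂ r + (N - 1) * S₁ r)
    (hS00 : S₀ 0 = 1) (hS10 : S₁ 0 = 0)
    (hapos : ∀ r, 0 < r → 0 < aF S₀ S₁ r)
    (halt1 : ∀ r, 0 ≤ r → aF S₀ S₁ r < 1)
    (hann : ∀ r, 0 ≤ r → 0 ≤ aF S₀ S₁ r)
    {m : ℝ} (hm : 0 ≤ m) :
    0 ≤ psiF S₀ S₁ N m := by
  have hα := aF_hasDeriv (S₂ := S₂) hS0pos d0 d1
  have hψ0 : psiF S₀ S₁ N 0 = 0 := by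
    unfold psiF aF
    simp [hS10, hS00]
  -- derivative of psi
  have dψ : ∀ r, 0 ≤ r → HasDerivAt (psiF S₀ S₁ N)
      (adF S₀ S₁ S₂ r * (N * aF S₀ S₁ r / (1 - (aF S₀ S₁ r) ^ 2) - r)) r := by
    intro r hr
    have hne : 1 - (aF S₀ S₁ r) ^ 2 ≠ 0 := by
      have := halt1 r hr
      have := hann r hr
      nlinarith
    have h1 : HasDerivAt (fun x => Real.log (S₀ x)) (S₁ r / S₀ r) r :=
      (d0 r).log (ne_of_gt (hS0pos r))
    have h2 : HasDerivAt (fun x => x * aF S₀ S₁ x)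
        (1 * aF S₀ S₁ r + r * adF S₀ S₁ S₂ r) r := (hasDerivAt_id r).mul (hα r)
    have h3 : HasDerivAt (fun x => 1 - (aF S₀ S₁ x) ^ 2)
        (-(2 * aF S₀ S₁ r ^ 1 * adF S₀ S₁ S₂ r)) r := ((hα r).pow 2).const_sub 1
    have h4 := (h3.log hne).const_mul (N / 2)
    have h5 := (h1.sub h2).sub h4
    have he : (fun x => Real.log (S₀ x) - x * aF S₀ S₁ x
        - N / 2 * Real.log (1 - aF S₀ S₁ x ^ 2)) = psiF S₀ S₁ N := by
      funext x
      unfold psiF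
      ring
    simp only [Pi.sub_def] at h5
    rw [he] at h5
    refine h5.congr_deriv ?_
    have haS : aF S₀ S₁ r = S₁ r / S₀ r := rfl
    rw [← haS]
    field_simp
    ring
  have hψd_nonneg : ∀ r, 0 < r →
      0 ≤ adF S₀ S₁ S₂ r * (N * aF S₀ S₁ r / (1 - (aF S₀ S₁ r) ^ 2) - r) := by
    intro r hr
    apply mul_nonneg (adF_nonneg hS0pos hCS r)
    have hQ := QF_nonpos hN hS0pos d0 d1 hCS hODE hS10 hapos halt1 (le_of_lt hr)
    unfold QF at hQ
    have hne : 0 < 1 - (aF S₀ S₁ r) ^ 2 := by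
      have := halt1 r (le_of_lt hr)
      have := hann r (le_of_lt hr)
      nlinarith
    have h6 : r ≤ N * aF S₀ S₁ r / (1 - (aF S₀ S₁ r) ^ 2) := by
      rw [le_div_iff₀ hne]
      nlinarith
    linarith
  have hψmono : MonotoneOn (psiF S₀ S₁ N) (Set.Ici 0) := by
    apply monotoneOn_of_deriv_nonneg (convex_Ici 0)
    · intro r hr
      exact (dψ r hr).differentiableAt.continuousAt.continuousWithinAt
    · intro r hr
      rw [interior_Ici] at hr
      exact (dψ r (le_of_lt hr)).differentiableAt.differentiableWithinAt
    · intro r hr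
      rw [interior_Ici] at hr
      rw [(dψ r (le_of_lt hr)).deriv]
      exact hψd_nonneg r hr
  have := hψmono Set.self_mem_Ici (Set.mem_Ici.2 hm) hm
  linarith [hψ0]

lemma analytic_main (n : ℕ) (hn : 1 ≤ n) (S₀ S₁ S₂ S₃ : ℝ → ℝ)
    (d0 : ∀ r, HasDerivAt S₀ (S₁ r) r)
    (d1 : ∀ r, HasDerivAt S₁ (S₂ r) r)
    (d2 : ∀ r, HasDerivAt S₂ (S₃ r) r)
    (hS00 : S₀ 0 = 1) (hS10 : S₁ 0 = 0)
    (hpos : ∀ r, Real.exp (-|r|) ≤ S₀ r)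
    (hgap : ∀ r, 0 ≤ r → Real.exp (-r) ≤ S₀ r - S₁ r)
    (hlb : ∀ r, 0 ≤ r → r * S₂ 0 ≤ S₁ r)
    (hODE : ∀ r, r * S₀ r = r * S₂ r + ((n:ℝ) - 1) * S₁ r)
    (hCS : ∀ r, (S₁ r) ^ 2 ≤ S₀ r * S₂ r)
    (ε : ℝ) (hε0 : 0 < ε) (hε1 : ε < 1) (r₀ : ℝ) (hr₀ : 0 ≤ r₀) :
    ε * r₀ + ((n:ℝ) / 2) * Real.log (1 - ε ^ 2) ≤ Real.log (S₀ r₀) := by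
  have hN : (1:ℝ) ≤ (n:ℝ) := by exact_mod_cast hn
  have hNpos : (0:ℝ) < (n:ℝ) := by linarith
  have hε2 : 0 < 1 - ε ^ 2 := by nlinarith
  have hS0pos : ∀ r, 0 < S₀ r := fun r => lt_of_lt_of_le (Real.exp_pos _) (hpos r)
  have hα := aF_hasDeriv (S₂ := S₂) hS0pos d0 d1
  -- S₂ 0 = 1/n
  have hm1 : (n:ℝ) * S₂ 0 = 1 := by
    have dL : HasDerivAt (fun r => r * S₀ r) (1 * S₀ 0 + 0 * S₁ 0) 0 :=
      (hasDerivAt_id 0).mul (d0 0)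
    have dR : HasDerivAt (fun r => r * S₂ r + ((n:ℝ) - 1) * S₁ r)
        ((1 * S₂ 0 + 0 * S₃ 0) + ((n:ℝ) - 1) * S₂ 0) 0 :=
      ((hasDerivAt_id 0).mul (d2 0)).add ((d1 0).const_mul ((n:ℝ) - 1))
    have hfun : (fun r => r * S₀ r) = fun r => r * S₂ r + ((n:ℝ) - 1) * S₁ r := funext hODE
    rw [hfun] at dL
    have huniq := dL.unique dR
    rw [hS00, hS10] at huniq
    nlinarith [huniq]
  have hS20pos : 0 < S₂ 0 := by nlinarith
  -- basic facts about α = aF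
  have hα0 : aF S₀ S₁ 0 = 0 := by unfold aF; simp [hS10]
  have hαmono := aF_mono hS0pos hCS d0 d1
  have hαcont := aF_cont (S₂ := S₂) hS0pos d0 d1
  have hann : ∀ r, 0 ≤ r → 0 ≤ aF S₀ S₁ r := fun r hr => hα0 ▸ hαmono hr
  have hapos : ∀ r, 0 < r → 0 < aF S₀ S₁ r := by
    intro r hr
    have h1 := hlb r (le_of_lt hr)
    have h2 : 0 < S₁ r := lt_of_lt_of_le (by positivity) h1
    exact div_pos h2 (hS0pos r)
  have halt1 : ∀ r, 0 ≤ r → aF S₀ S₁ r < 1 := by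
    intro r hr
    unfold aF
    apply (div_lt_one (hS0pos r)).2
    have h1 := hgap r hr
    have h2 := Real.exp_pos (-r)
    linarith
  -- the crossing point m
  set R : ℝ := (n:ℝ) * ε / (1 - ε ^ 2) with hRdef
  have hR0 : 0 ≤ R := by positivity
  have hαR : ε ≤ aF S₀ S₁ R := by
    by_contra hcon
    push_neg at hcon
    have hQR := QF_nonpos (N := (n:ℝ)) hN hS0pos d0 d1 hCS hODE hS10 hapos halt1 hR0
    unfold QF at hQR
    have hRpos : 0 < R := by positivity
    have hαRnn := hann R hR0
    have hRε : R * (1 - ε ^ 2) = (n:ℝ) * ε := by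
      rw [hRdef]
      field_simp
    nlinarith [hQR, hcon, hαRnn, hRpos, hRε,
      mul_pos hRpos (mul_pos hε0 (sub_pos.2 hcon))]
  obtain ⟨m, hmIcc, hmval⟩ : ∃ m ∈ Set.Icc 0 R, aF S₀ S₁ m = ε := by
    have hsub := intermediate_value_Icc hR0 hαcont.continuousOn
    have hmem : ε ∈ Set.Icc (aF S₀ S₁ 0) (aF S₀ S₁ R) := by
      rw [hα0]
      exact Set.mem_Icc.2 ⟨le_of_lt hε0, hαR⟩
    obtain ⟨m, hm, hmval⟩ := hsub hmem
    exact ⟨m, hm, hmval⟩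
  have hm0 : 0 ≤ m := hmIcc.1
  -- bound at m from psi
  have hψm := psiF_nonneg (N := (n:ℝ)) hN hS0pos d0 d1 hCS hODE hS00 hS10 hapos halt1 hann hm0
  unfold psiF at hψm
  rw [hmval] at hψm
  -- h function and its monotonicity
  have dh : ∀ r, HasDerivAt (fun x => Real.log (S₀ x) - ε * x) (aF S₀ S₁ r - ε) r := by
    intro r
    have h1 : HasDerivAt (fun x => Real.log (S₀ x)) (S₁ r / S₀ r) r :=
      (d0 r).log (ne_of_gt (hS0pos r))
    have h2 := h1.sub ((hasDerivAt_id r).const_mul ε)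
    have he : (fun x => Real.log (S₀ x) - ε * id x) = fun x => Real.log (S₀ x) - ε * x := by
      funext x; simp
    simp only [Pi.sub_def] at h2
    rw [he] at h2
    refine h2.congr_deriv ?_
    unfold aF
    simp
  have hhr₀ : Real.log (S₀ m) - ε * m ≤ Real.log (S₀ r₀) - ε * r₀ := by
    rcases le_or_gt r₀ m with hcase | hcase
    · have hanti2 : AntitoneOn (fun x => Real.log (S₀ x) - ε * x) (Set.Icc 0 m) := by
        apply antitoneOn_of_deriv_nonpos (convex_Icc 0 m)
        · exact (continuous_iff_continuousAt.2 fun r =>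
            (dh r).differentiableAt.continuousAt).continuousOn
        · intro t ht
          rw [interior_Icc] at ht
          exact (dh t).differentiableAt.differentiableWithinAt
        · intro t ht
          rw [interior_Icc] at ht
          rw [(dh t).deriv]
          have h7 : aF S₀ S₁ t ≤ aF S₀ S₁ m := hαmono (le_of_lt ht.2)
          rw [hmval] at h7
          linarith
      exact hanti2 (Set.mem_Icc.2 ⟨hr₀, hcase⟩) (Set.mem_Icc.2 ⟨hm0, le_refl m⟩) hcase
    · have hmono2 : MonotoneOn (fun x => Real.log (S₀ x) - ε * x) (Set.Icc m r₀) := by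
        apply monotoneOn_of_deriv_nonneg (convex_Icc m r₀)
        · exact (continuous_iff_continuousAt.2 fun r =>
            (dh r).differentiableAt.continuousAt).continuousOn
        · intro t ht
          rw [interior_Icc] at ht
          exact (dh t).differentiableAt.differentiableWithinAt
        · intro t ht
          rw [interior_Icc] at ht
          rw [(dh t).deriv]
          have h7 : aF S₀ S₁ m ≤ aF S₀ S₁ t := hαmono (le_of_lt ht.1)
          rw [hmval] at h7
          linarith
      exact hmono2 (Set.mem_Icc.2 ⟨le_refl m, le_of_lt hcase⟩)
        (Set.mem_Icc.2 ⟨le_of_lt hcase, le_refl r₀⟩) (le_of_lt hcase)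
  linarith [hψm, hhr₀]

end Analytic
end AMGFAux

/-- Exponential growth lower bound for the AMGF energy function:
`Φ_{n,λ}(x) ≥ (1-ε²)^{n/2} exp(ε‖λx‖)` for every `ε ∈ (0,1)`. -/
theorem amgf_energy_exponential_growth
    (n : ℕ) (hn : 1 ≤ n) (lam : ℝ)
    (μ : Measure (EuclideanSpace ℝ (Fin n))) [IsProbabilityMeasure μ]
    (hsupp : ∀ᵐ ℓ ∂μ, ‖ℓ‖ = 1)
    (hrot : ∀ e : EuclideanSpace ℝ (Fin n) ≃ₗᵢ[ℝ] EuclideanSpace ℝ (Fin n),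
      μ.map e = μ)
    (x : EuclideanSpace ℝ (Fin n)) (ε : ℝ) (hε : ε ∈ Set.Ioo (0:ℝ) 1) :
    (1 - ε ^ 2) ^ ((n : ℝ) / 2) * Real.exp (ε * ‖lam • x‖)
      ≤ ∫ u, Real.exp (lam * ⟪u, x⟫) ∂μ := by
  obtain ⟨hε0, hε1⟩ := hε
  have hε2 : 0 < 1 - ε ^ 2 := by nlinarith
  rcases eq_or_ne (lam • x) 0 with hy | hy
  · -- degenerate case : `lam • x = 0`
    have hzero : ∀ u : EuclideanSpace ℝ (Fin n), lam * ⟪u, x⟫ = 0 := by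
      intro u
      have : (⟪u, lam • x⟫ : ℝ) = 0 := by rw [hy, inner_zero_right]
      rw [real_inner_smul_right] at this
      linarith
    have hint : ∫ u, Real.exp (lam * ⟪u, x⟫) ∂μ = 1 := by
      have : ∀ u : EuclideanSpace ℝ (Fin n), Real.exp (lam * ⟪u, x⟫) = 1 := by
        intro u; rw [hzero u, Real.exp_zero]
      rw [integral_congr_ae (Filter.Eventually.of_forall this)]
      simp
    rw [hint, hy, norm_zero, mul_zero, Real.exp_zero, mul_one]
    apply Real.rpow_le_one (le_of_lt hε2) (by nlinarith) (by positivity)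
  · -- main case
    set y : EuclideanSpace ℝ (Fin n) := lam • x with hydef
    have hr₀pos : 0 < ‖y‖ := norm_pos_iff.2 hy
    set r₀ : ℝ := ‖y‖ with hr₀def
    set v : EuclideanSpace ℝ (Fin n) := ‖y‖⁻¹ • y with hvdef
    have hv1 : ‖v‖ = 1 := by
      rw [hvdef, norm_smul, norm_inv, norm_norm, inv_mul_cancel₀ (ne_of_gt hr₀pos)]
    have hpoint : ∀ u : EuclideanSpace ℝ (Fin n), lam * ⟪u, x⟫ = r₀ * ⟪u, v⟫ := by
      intro u
      rw [hvdef, real_inner_smul_right]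
      have h1 : (⟪u, y⟫ : ℝ) = lam * ⟪u, x⟫ := by
        rw [hydef, real_inner_smul_right]
      rw [h1]
      rw [mul_inv_cancel_left₀ (ne_of_gt hr₀pos)]
    have hint : ∫ u, Real.exp (lam * ⟪u, x⟫) ∂μ = Sk μ v 0 r₀ := by
      unfold Sk
      apply integral_congr_ae
      filter_upwards with u
      rw [hpoint u]
      simp
    have hmain := analytic_main n hn (Sk μ v 0) (Sk μ v 1) (Sk μ v 2) (Sk μ v 3)
      (fun r => hasDerivAt_Sk hsupp hv1 0 r)
      (fun r => hasDerivAt_Sk hsupp hv1 1 r)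
      (fun r => hasDerivAt_Sk hsupp hv1 2 r)
      (S0_zero) (S1_zero hrot) (fun r => S0_pos hsupp hv1 r)
      (fun r hr => S_gap hsupp hrot hv1 r hr)
      (fun r hr => S1_lb hsupp hrot hv1 r hr)
      (fun r => S_ODE hn hsupp hrot hv1 r)
      (fun r => S_CS hsupp hv1 r)
      ε hε0 hε1 r₀ (le_of_lt hr₀pos)
    have hS0pos : 0 < Sk μ v 0 r₀ :=
      lt_of_lt_of_le (Real.exp_pos _) (S0_pos hsupp hv1 r₀)
    rw [hint]
    have hrpow : (1 - ε ^ 2) ^ ((n : ℝ) / 2) = Real.exp (Real.log (1 - ε ^ 2) * ((n:ℝ)/2)) :=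
      Real.rpow_def_of_pos hε2 _
    rw [hrpow, ← Real.exp_add]
    calc Real.exp (Real.log (1 - ε ^ 2) * ((n:ℝ)/2) + ε * ‖lam • x‖)
        ≤ Real.exp (Real.log (Sk μ v 0 r₀)) := by
          apply Real.exp_le_exp.2
          have : ε * ‖lam • x‖ = ε * r₀ := rfl
          rw [this]
          linarith [hmain]
    _ = Sk μ v 0 r₀ := Real.exp_log hS0pos
end

section
/- Let {S_t}_{t=0,…,T} be a discrete-time process in R^n with S_0 = 0, S_{t+1} = β_t + w_t, where ‖β_t‖ ≤ ‖S_t‖ almost surely (β_t measurable with respect to the history up to time t) and w_t ∼ subG(σ²) is independent of the history. Then for every λ ∈ R and every t, E[Φ_{n,λ}(S_{t+1}) | S_t] ≤ exp(λ²σ²/2) · Φ_{n,λ}(S_t), i.e., Φ_{n,λ}(S_t) is an affine martingale with a_t = exp(λ²σ²/2) and b_t = 0. -/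
open MeasureTheory Real ProbabilityTheory
open scoped RealInnerProductSpace ENNReal

namespace AmgfAux

variable {n : ℕ} (μsph : Measure (EuclideanSpace ℝ (Fin n))) [IsProbabilityMeasure μsph]
  (lam : ℝ)

lemma sphInt (hsupp : ∀ᵐ ℓ ∂μsph, ‖ℓ‖ = 1) (x : EuclideanSpace ℝ (Fin n)) :
    Integrable (fun u => Real.exp (lam * ⟪u, x⟫)) μsph := by
  refine Integrable.mono' (integrable_const (Real.exp (|lam| * ‖x‖))) ?_ ?_
  · exact (continuous_const.mul (continuous_id.inner continuous_const)).rexp.aestronglyMeasurable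
  · filter_upwards [hsupp] with u hu
    rw [Real.norm_eq_abs, abs_of_pos (Real.exp_pos _)]
    apply Real.exp_le_exp.2
    calc lam * ⟪u, x⟫ ≤ |lam * ⟪u, x⟫| := le_abs_self _
      _ = |lam| * |⟪u, x⟫| := abs_mul _ _
      _ ≤ |lam| * ‖x‖ := by
          refine mul_le_mul_of_nonneg_left ?_ (abs_nonneg _)
          calc |⟪u, x⟫| ≤ ‖u‖ * ‖x‖ := abs_real_inner_le_norm u x
            _ = ‖x‖ := by rw [hu, one_mul]

lemma phi_rot
    (hrot : ∀ e : EuclideanSpace ℝ (Fin n) ≃ₗᵢ[ℝ] EuclideanSpace ℝ (Fin n), μsph.map e = μsph)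
    (e : EuclideanSpace ℝ (Fin n) ≃ₗᵢ[ℝ] EuclideanSpace ℝ (Fin n))
    (x : EuclideanSpace ℝ (Fin n)) :
    ∫ u, Real.exp (lam * ⟪u, x⟫) ∂μsph = ∫ u, Real.exp (lam * ⟪u, e x⟫) ∂μsph := by
  conv_rhs => rw [← hrot e]
  have ham : AEStronglyMeasurable (fun u : EuclideanSpace ℝ (Fin n) =>
      Real.exp (lam * ⟪u, e x⟫)) (μsph.map e) :=
    Continuous.aestronglyMeasurable
      ((continuous_const.mul ((continuous_id.inner continuous_const :
        Continuous fun u : EuclideanSpace ℝ (Fin n) => ⟪u, e x⟫))).rexp)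
  rw [integral_map e.continuous.measurable.aemeasurable ham]
  simp only [LinearIsometryEquiv.inner_map_map]

lemma coshInt (hsupp : ∀ᵐ ℓ ∂μsph, ‖ℓ‖ = 1) (x : EuclideanSpace ℝ (Fin n)) :
    Integrable (fun u => Real.cosh (lam * ⟪u, x⟫)) μsph := by
  have h : (fun u : EuclideanSpace ℝ (Fin n) => Real.cosh (lam * ⟪u, x⟫)) =
      fun u => (Real.exp (lam * ⟪u, x⟫) + Real.exp (lam * ⟪u, -x⟫)) / 2 := by
    funext u
    rw [Real.cosh_eq, inner_neg_right, mul_neg]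
  rw [h]
  exact ((sphInt μsph lam hsupp x).add (sphInt μsph lam hsupp (-x))).div_const 2

lemma phi_cosh (hsupp : ∀ᵐ ℓ ∂μsph, ‖ℓ‖ = 1)
    (hrot : ∀ e : EuclideanSpace ℝ (Fin n) ≃ₗᵢ[ℝ] EuclideanSpace ℝ (Fin n), μsph.map e = μsph)
    (x : EuclideanSpace ℝ (Fin n)) :
    ∫ u, Real.exp (lam * ⟪u, x⟫) ∂μsph = ∫ u, Real.cosh (lam * ⟪u, x⟫) ∂μsph := by
  have hneg := phi_rot μsph lam hrot (LinearIsometryEquiv.neg ℝ) x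
  simp only [LinearIsometryEquiv.coe_neg] at hneg
  have h : (fun u : EuclideanSpace ℝ (Fin n) => Real.cosh (lam * ⟪u, x⟫)) =
      fun u => (Real.exp (lam * ⟪u, x⟫) + Real.exp (lam * ⟪u, -x⟫)) / 2 := by
    funext u
    rw [Real.cosh_eq, inner_neg_right, mul_neg]
  rw [h]
  rw [integral_div, integral_add (sphInt μsph lam hsupp x) (sphInt μsph lam hsupp (-x)), ← hneg]
  ring

lemma phi_mono (hsupp : ∀ᵐ ℓ ∂μsph, ‖ℓ‖ = 1)
    (hrot : ∀ e : EuclideanSpace ℝ (Fin n) ≃ₗᵢ[ℝ] EuclideanSpace ℝ (Fin n), μsph.map e = μsph)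
    {x y : EuclideanSpace ℝ (Fin n)} (hxy : ‖x‖ ≤ ‖y‖) :
    ∫ u, Real.exp (lam * ⟪u, x⟫) ∂μsph ≤ ∫ u, Real.exp (lam * ⟪u, y⟫) ∂μsph := by
  by_cases hy : y = 0
  · have hx : x = 0 := norm_le_zero_iff.1 (by simpa [hy] using hxy)
    rw [hx, hy]
  · set s : ℝ := ‖y‖ with hs
    have hs0 : 0 < s := norm_pos_iff.2 hy
    obtain ⟨v, hv1, hyv⟩ : ∃ v : EuclideanSpace ℝ (Fin n), ‖v‖ = 1 ∧ y = s • v :=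
      ⟨(‖y‖⁻¹ : ℝ) • y, norm_smul_inv_norm hy, by
        rw [smul_smul, hs, mul_inv_cancel₀ (norm_pos_iff.2 hy).ne', one_smul]⟩
    have hx' : ∫ u, Real.exp (lam * ⟪u, x⟫) ∂μsph
        = ∫ u, Real.exp (lam * ⟪u, ‖x‖ • v⟫) ∂μsph := by
      by_cases hx : x = 0
      · rw [hx]; simp
      · have hnorm : ‖x‖ = ‖‖x‖ • v‖ := by
          rw [norm_smul, hv1, mul_one, Real.norm_eq_abs, abs_of_nonneg (norm_nonneg x)]
        have h := phi_rot μsph lam hrot (Submodule.reflection (ℝ ∙ (x - ‖x‖ • v))ᗮ) x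
        rwa [Submodule.reflection_sub hnorm] at h
    rw [hx', hyv, phi_cosh μsph lam hsupp hrot, phi_cosh μsph lam hsupp hrot]
    refine integral_mono (coshInt μsph lam hsupp _) (coshInt μsph lam hsupp _) fun u => ?_
    apply Real.cosh_le_cosh.2
    rw [real_inner_smul_right, real_inner_smul_right]
    have h1 : lam * (‖x‖ * ⟪u, v⟫) = ‖x‖ * (lam * ⟪u, v⟫) := by ring
    have h2 : lam * (s * ⟪u, v⟫) = s * (lam * ⟪u, v⟫) := by ring
    have e1 : |lam * (‖x‖ * ⟪u, v⟫)| = ‖x‖ * |lam * ⟪u, v⟫| := by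
      rw [h1, abs_mul, abs_of_nonneg (norm_nonneg x)]
    have e2 : |lam * (s * ⟪u, v⟫)| = s * |lam * ⟪u, v⟫| := by
      rw [h2, abs_mul, abs_of_nonneg hs0.le]
    rw [e1, e2]
    exact mul_le_mul_of_nonneg_right hxy (abs_nonneg _)

end AmgfAux

/-- The AMGF energy of the deviation process `S_{t+1} = β_t + w_t` with
`‖β_t‖ ≤ ‖S_t‖` and `w_t ∼ subG(σ²)` independent of the history is an affine
martingale: `E[Φ_{n,λ}(S_{t+1}) | ℱ_t] ≤ exp(λ²σ²/2) Φ_{n,λ}(S_t)`. -/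
theorem amgf_energy_affine_martingale
    {n : ℕ} (μsph : Measure (EuclideanSpace ℝ (Fin n))) [IsProbabilityMeasure μsph]
    (hsupp : ∀ᵐ ℓ ∂μsph, ‖ℓ‖ = 1)
    (hrot : ∀ e : EuclideanSpace ℝ (Fin n) ≃ₗᵢ[ℝ] EuclideanSpace ℝ (Fin n),
      μsph.map e = μsph)
    {Ω : Type*} {mΩ : MeasurableSpace Ω} (P : Measure Ω) [IsProbabilityMeasure P]
    (ℱ : Filtration ℕ mΩ) (σ lam : ℝ)
    (S β w : ℕ → Ω → EuclideanSpace ℝ (Fin n))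
    (hS0 : ∀ ω, S 0 ω = 0)
    (hrec : ∀ t ω, S (t + 1) ω = β t ω + w t ω)
    (hSad : ∀ t, StronglyMeasurable[ℱ t] (S t))
    (hβad : ∀ t, StronglyMeasurable[ℱ t] (β t))
    (hβ : ∀ t, ∀ᵐ ω ∂P, ‖β t ω‖ ≤ ‖S t ω‖)
    (hwm : ∀ t, Measurable (w t))
    (hwind : ∀ t, Indep (MeasurableSpace.comap (w t) inferInstance) (ℱ t) P)
    (hwmean : ∀ t, ∫ ω, w t ω ∂P = 0)
    (hwsub : ∀ t, ∀ ℓ : EuclideanSpace ℝ (Fin n), ‖ℓ‖ = 1 → ∀ l : ℝ,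
      ∫ ω, Real.exp (l * ⟪ℓ, w t ω⟫) ∂P ≤ Real.exp (l ^ 2 * σ ^ 2 / 2)) :
    ∀ t, P[fun ω => ∫ u, Real.exp (lam * ⟪u, S (t + 1) ω⟫) ∂μsph|ℱ t]
      ≤ᵐ[P] fun ω =>
        Real.exp (lam ^ 2 * σ ^ 2 / 2) * ∫ u, Real.exp (lam * ⟪u, S t ω⟫) ∂μsph := by
  intro t
  set c : ℝ := Real.exp (lam ^ 2 * σ ^ 2 / 2) with hc
  have hc0 : 0 < c := Real.exp_pos _
  set Φ : EuclideanSpace ℝ (Fin n) → ℝ := fun x => ∫ u, Real.exp (lam * ⟪u, x⟫) ∂μsph with hΦ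
  have hΦ0 : ∀ x, 0 ≤ Φ x := fun x => integral_nonneg fun u => (Real.exp_pos _).le
  by_cases hInt : Integrable (fun ω => Φ (S (t + 1) ω)) P
  swap
  · rw [show (fun ω => ∫ u, Real.exp (lam * ⟪u, S (t + 1) ω⟫) ∂μsph)
        = fun ω => Φ (S (t + 1) ω) from rfl, condExp_of_not_integrable hInt]
    filter_upwards with ω
    exact mul_nonneg hc0.le (hΦ0 _)
  · have hle : ℱ t ≤ mΩ := ℱ.le t
    have hβm : Measurable (β t) := ((hβad t).measurable).mono hle le_rfl
    have hwmt : Measurable (w t) := hwm t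
    have hprodmeas : ∀ X : Ω → EuclideanSpace ℝ (Fin n), Measurable X →
        Measurable (fun p : Ω × EuclideanSpace ℝ (Fin n) =>
          ENNReal.ofReal (Real.exp (lam * ⟪p.2, X p.1⟫))) := fun X hX =>
      ENNReal.measurable_ofReal.comp (Real.measurable_exp.comp
        (measurable_const.mul (measurable_snd.inner (hX.comp measurable_fst))))
    have hβinner : ∀ u : EuclideanSpace ℝ (Fin n),
        Measurable[ℱ t] fun ω => ENNReal.ofReal (Real.exp (lam * ⟪u, β t ω⟫)) := fun u =>
      ENNReal.measurable_ofReal.comp (Real.measurable_exp.comp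
        (measurable_const.mul (Measurable.inner measurable_const (hβad t).measurable)))
    have hofReal : ∀ x : EuclideanSpace ℝ (Fin n), ENNReal.ofReal (Φ x)
        = ∫⁻ u, ENNReal.ofReal (Real.exp (lam * ⟪u, x⟫)) ∂μsph := fun x =>
      ofReal_integral_eq_lintegral_ofReal (AmgfAux.sphInt μsph lam hsupp x)
        (Filter.Eventually.of_forall fun u => (Real.exp_pos _).le)
    have hsplit : ∀ ω, ENNReal.ofReal (Φ (S (t + 1) ω))
        = ∫⁻ u, ENNReal.ofReal (Real.exp (lam * ⟪u, β t ω⟫))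
            * ENNReal.ofReal (Real.exp (lam * ⟪u, w t ω⟫)) ∂μsph := by
      intro ω
      rw [hofReal]
      refine lintegral_congr fun u => ?_
      rw [← ENNReal.ofReal_mul (Real.exp_pos _).le, ← Real.exp_add, hrec t ω, inner_add_right,
        mul_add]
    have hprod : Measurable (Function.uncurry fun (ω : Ω) (u : EuclideanSpace ℝ (Fin n)) =>
        ENNReal.ofReal (Real.exp (lam * ⟪u, β t ω⟫))
          * ENNReal.ofReal (Real.exp (lam * ⟪u, w t ω⟫))) :=
      (hprodmeas _ hβm).mul (hprodmeas _ hwmt)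
    have hβprod : Measurable (Function.uncurry fun (ω : Ω) (u : EuclideanSpace ℝ (Fin n)) =>
        ENNReal.ofReal (Real.exp (lam * ⟪u, β t ω⟫))) := hprodmeas _ hβm
    have hswap : ∀ B : Set Ω, MeasurableSet B →
        ∫⁻ ω in B, ∫⁻ u, ENNReal.ofReal (Real.exp (lam * ⟪u, β t ω⟫))
            * ENNReal.ofReal (Real.exp (lam * ⟪u, w t ω⟫)) ∂μsph ∂P
          = ∫⁻ u, ∫⁻ ω in B, ENNReal.ofReal (Real.exp (lam * ⟪u, β t ω⟫))
            * ENNReal.ofReal (Real.exp (lam * ⟪u, w t ω⟫)) ∂P ∂μsph := fun B hB =>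
      lintegral_lintegral_swap hprod.aemeasurable
    have hswapβ : ∀ B : Set Ω, MeasurableSet B →
        ∫⁻ ω in B, ∫⁻ u, ENNReal.ofReal (Real.exp (lam * ⟪u, β t ω⟫)) ∂μsph ∂P
          = ∫⁻ u, ∫⁻ ω in B, ENNReal.ofReal (Real.exp (lam * ⟪u, β t ω⟫)) ∂P ∂μsph := fun B hB =>
      lintegral_lintegral_swap hβprod.aemeasurable
    have hfact : ∀ (u : EuclideanSpace ℝ (Fin n)) (B : Set Ω), MeasurableSet[ℱ t] B →
        ∫⁻ ω in B, ENNReal.ofReal (Real.exp (lam * ⟪u, β t ω⟫))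
            * ENNReal.ofReal (Real.exp (lam * ⟪u, w t ω⟫)) ∂P
          = (∫⁻ ω in B, ENNReal.ofReal (Real.exp (lam * ⟪u, β t ω⟫)) ∂P)
            * ∫⁻ ω, ENNReal.ofReal (Real.exp (lam * ⟪u, w t ω⟫)) ∂P := by
      intro u B hB
      have hBm : MeasurableSet B := hle B hB
      have hg : Measurable[MeasurableSpace.comap (w t) inferInstance]
          fun ω => ENNReal.ofReal (Real.exp (lam * ⟪u, w t ω⟫)) :=
        (ENNReal.measurable_ofReal.comp (Real.measurable_exp.comp
          (measurable_const.mul (Measurable.inner measurable_const measurable_id)))).comp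
          (comap_measurable (w t))
      rw [← lintegral_indicator hBm, ← lintegral_indicator hBm]
      have h1 : ∀ ω, B.indicator (fun ω => ENNReal.ofReal (Real.exp (lam * ⟪u, β t ω⟫))
          * ENNReal.ofReal (Real.exp (lam * ⟪u, w t ω⟫))) ω
          = B.indicator (fun ω => ENNReal.ofReal (Real.exp (lam * ⟪u, β t ω⟫))) ω
            * ENNReal.ofReal (Real.exp (lam * ⟪u, w t ω⟫)) := by
        intro ω
        by_cases hω : ω ∈ B <;> simp [hω]
      simp_rw [h1]
      exact lintegral_mul_eq_lintegral_mul_lintegral_of_independent_measurableSpace hle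
        ((hwm t).comap_le) ((hwind t).symm) ((hβinner u).indicator hB) hg
    -- finiteness of the full-space lintegral, for a.e. direction u
    have h1 : ∫⁻ ω, ENNReal.ofReal (Φ (S (t + 1) ω)) ∂P < ∞ := by
      calc ∫⁻ ω, ENNReal.ofReal (Φ (S (t + 1) ω)) ∂P
          ≤ ∫⁻ ω, (‖Φ (S (t + 1) ω)‖₊ : ℝ≥0∞) ∂P :=
            lintegral_mono fun ω => Real.ofReal_le_enorm _
        _ < ∞ := hInt.2
    have h2 : ∫⁻ u, ∫⁻ ω, ENNReal.ofReal (Real.exp (lam * ⟪u, β t ω⟫))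
        * ENNReal.ofReal (Real.exp (lam * ⟪u, w t ω⟫)) ∂P ∂μsph < ∞ := by
      have := hswap Set.univ MeasurableSet.univ
      rw [Measure.restrict_univ] at this
      rw [← this]
      calc ∫⁻ ω, ∫⁻ u, ENNReal.ofReal (Real.exp (lam * ⟪u, β t ω⟫))
            * ENNReal.ofReal (Real.exp (lam * ⟪u, w t ω⟫)) ∂μsph ∂P
          = ∫⁻ ω, ENNReal.ofReal (Φ (S (t + 1) ω)) ∂P := by
            refine lintegral_congr fun ω => (hsplit ω).symm
        _ < ∞ := h1
    have h3 : ∀ᵐ u ∂μsph, ∫⁻ ω, ENNReal.ofReal (Real.exp (lam * ⟪u, β t ω⟫))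
        * ENNReal.ofReal (Real.exp (lam * ⟪u, w t ω⟫)) ∂P < ∞ :=
      ae_lt_top hprod.lintegral_prod_left' h2.ne
    have hL2 : ∀ᵐ u ∂μsph,
        ∫⁻ ω, ENNReal.ofReal (Real.exp (lam * ⟪u, w t ω⟫)) ∂P ≤ ENNReal.ofReal c := by
      filter_upwards [hsupp, h3] with u hu hufin
      have hβpos : 0 < ∫⁻ ω, ENNReal.ofReal (Real.exp (lam * ⟪u, β t ω⟫)) ∂P := by
        rw [lintegral_pos_iff_support ((hβinner u).mono hle le_rfl)]
        have hs : (Function.support fun ω => ENNReal.ofReal (Real.exp (lam * ⟪u, β t ω⟫)))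
            = Set.univ := by
          ext ω
          simp [Function.mem_support, (ENNReal.ofReal_pos.2 (Real.exp_pos _)).ne']
        rw [hs]
        simp
      have hufact := hfact u Set.univ MeasurableSet.univ
      rw [Measure.restrict_univ] at hufact
      rw [hufact] at hufin
      have hL2fin : ∫⁻ ω, ENNReal.ofReal (Real.exp (lam * ⟪u, w t ω⟫)) ∂P ≠ ∞ := by
        intro hcontra
        rw [hcontra, ENNReal.mul_top hβpos.ne'] at hufin
        exact absurd hufin (by simp)
      have hmeasw : Measurable fun ω => Real.exp (lam * ⟪u, w t ω⟫) :=
        Real.measurable_exp.comp (measurable_const.mul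
          (Measurable.inner measurable_const hwmt))
      have hintw : Integrable (fun ω => Real.exp (lam * ⟪u, w t ω⟫)) P := by
        refine ⟨hmeasw.aestronglyMeasurable, ?_⟩
        rw [hasFiniteIntegral_iff_ofReal
          (Filter.Eventually.of_forall fun ω => (Real.exp_pos _).le)]
        exact hL2fin.lt_top
      rw [← ofReal_integral_eq_lintegral_ofReal hintw
        (Filter.Eventually.of_forall fun ω => (Real.exp_pos _).le)]
      exact ENNReal.ofReal_le_ofReal (hwsub t u hu lam)
    -- the key set-integral bound
    have key : ∀ A : Set Ω, MeasurableSet[ℱ t] A →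
        ∫⁻ ω in A, ENNReal.ofReal (Φ (S (t + 1) ω)) ∂P
          ≤ ENNReal.ofReal c * ∫⁻ ω in A, ENNReal.ofReal (Φ (S t ω)) ∂P := by
      intro A hA
      have hAm : MeasurableSet A := hle A hA
      calc ∫⁻ ω in A, ENNReal.ofReal (Φ (S (t + 1) ω)) ∂P
          = ∫⁻ ω in A, ∫⁻ u, ENNReal.ofReal (Real.exp (lam * ⟪u, β t ω⟫))
              * ENNReal.ofReal (Real.exp (lam * ⟪u, w t ω⟫)) ∂μsph ∂P :=
            lintegral_congr fun ω => hsplit ω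
        _ = ∫⁻ u, ∫⁻ ω in A, ENNReal.ofReal (Real.exp (lam * ⟪u, β t ω⟫))
              * ENNReal.ofReal (Real.exp (lam * ⟪u, w t ω⟫)) ∂P ∂μsph := hswap A hAm
        _ = ∫⁻ u, (∫⁻ ω in A, ENNReal.ofReal (Real.exp (lam * ⟪u, β t ω⟫)) ∂P)
              * ∫⁻ ω, ENNReal.ofReal (Real.exp (lam * ⟪u, w t ω⟫)) ∂P ∂μsph :=
            lintegral_congr fun u => hfact u A hA
        _ ≤ ∫⁻ u, (∫⁻ ω in A, ENNReal.ofReal (Real.exp (lam * ⟪u, β t ω⟫)) ∂P)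
              * ENNReal.ofReal c ∂μsph := by
            refine lintegral_mono_ae ?_
            filter_upwards [hL2] with u hu
            exact mul_le_mul_right hu _
        _ = ENNReal.ofReal c
              * ∫⁻ u, ∫⁻ ω in A, ENNReal.ofReal (Real.exp (lam * ⟪u, β t ω⟫)) ∂P ∂μsph := by
            simp_rw [mul_comm _ (ENNReal.ofReal c)]
            exact lintegral_const_mul' _ _ ENNReal.ofReal_ne_top
        _ = ENNReal.ofReal c
              * ∫⁻ ω in A, ∫⁻ u, ENNReal.ofReal (Real.exp (lam * ⟪u, β t ω⟫)) ∂μsph ∂P := by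
            rw [hswapβ A hAm]
        _ = ENNReal.ofReal c * ∫⁻ ω in A, ENNReal.ofReal (Φ (β t ω)) ∂P := by
            refine congrArg _ (lintegral_congr fun ω => ?_)
            rw [hofReal]
        _ ≤ ENNReal.ofReal c * ∫⁻ ω in A, ENNReal.ofReal (Φ (S t ω)) ∂P := by
            refine mul_le_mul_right (lintegral_mono_ae ?_) _
            filter_upwards [ae_restrict_of_ae (hβ t)] with ω hω
            exact ENNReal.ofReal_le_ofReal (AmgfAux.phi_mono μsph lam hsupp hrot hω)
    -- conclude via the trimmed measure
    have hGmeas : StronglyMeasurable[ℱ t] fun ω => Φ (S t ω) := by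
      letI : MeasurableSpace Ω := ℱ t
      exact MeasureTheory.StronglyMeasurable.integral_prod_right
        (Measurable.stronglyMeasurable
          (Real.measurable_exp.comp (measurable_const.mul
            (measurable_snd.inner ((hSad t).measurable.comp measurable_fst)))))
    have hcnn : 0 ≤ᵐ[P] P[fun ω => Φ (S (t + 1) ω)|ℱ t] :=
      condExp_nonneg (Filter.Eventually.of_forall fun ω => hΦ0 _)
    have htrim : (fun ω => ENNReal.ofReal ((P[fun ω => Φ (S (t + 1) ω)|ℱ t]) ω))
        ≤ᵐ[P.trim hle] fun ω => ENNReal.ofReal (c * Φ (S t ω)) := by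
      refine ae_le_of_forall_setLIntegral_le_of_sigmaFinite
        (ENNReal.measurable_ofReal.comp stronglyMeasurable_condExp.measurable)
        fun A hA _ => ?_
      have hf1 : Measurable[ℱ t] fun ω =>
          ENNReal.ofReal ((P[fun ω => Φ (S (t + 1) ω)|ℱ t]) ω) :=
        ENNReal.measurable_ofReal.comp stronglyMeasurable_condExp.measurable
      have hf2 : Measurable[ℱ t] fun ω => ENNReal.ofReal (c * Φ (S t ω)) :=
        ENNReal.measurable_ofReal.comp (measurable_const.mul hGmeas.measurable)
      rw [restrict_trim hle P hA, lintegral_trim hle hf1, lintegral_trim hle hf2]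
      have lhs1 : ∫⁻ ω in A, ENNReal.ofReal ((P[fun ω => Φ (S (t + 1) ω)|ℱ t]) ω) ∂P
          = ENNReal.ofReal (∫ ω in A, (P[fun ω => Φ (S (t + 1) ω)|ℱ t]) ω ∂P) :=
        (ofReal_integral_eq_lintegral_ofReal integrable_condExp.restrict
          (ae_restrict_of_ae hcnn)).symm
      rw [lhs1, setIntegral_condExp hle hInt hA,
        ofReal_integral_eq_lintegral_ofReal hInt.restrict
          (ae_restrict_of_ae (Filter.Eventually.of_forall fun ω => hΦ0 _))]
      calc ∫⁻ ω in A, ENNReal.ofReal (Φ (S (t + 1) ω)) ∂P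
          ≤ ENNReal.ofReal c * ∫⁻ ω in A, ENNReal.ofReal (Φ (S t ω)) ∂P := key A hA
        _ = ∫⁻ ω in A, ENNReal.ofReal (c * Φ (S t ω)) ∂P := by
            rw [← lintegral_const_mul' _ _ ENNReal.ofReal_ne_top]
            refine lintegral_congr fun ω => ?_
            rw [ENNReal.ofReal_mul hc0.le]
    have hfin2 := ae_of_ae_trim hle htrim
    filter_upwards [hfin2] with ω hω
    exact (ENNReal.ofReal_le_ofReal_iff (mul_nonneg hc0.le (hΦ0 _))).1 hω
end

section
/- Let L ∈ (0,1), σ > 0, δ ∈ (0,1), ε ∈ (0,1), T ∈ N, and Δt ∈ {1,…,T} dividing T with N = T/Δt. Suppose events F_k^{(1)} (‖X_{kΔt} − x_{kΔt}‖ ≤ r_{kΔt} with r_{kΔt} = σ sqrt(((L^{2kΔt}−1)/(L²−1))(ε₁n + ε₂ log(2N/δ)))) and F_k^{(2)} (per-interval tube bounds of size r^Δ = σ sqrt(((L^{−2(Δt−1)}−1)/(L^{−2}−1))(ε₁n + ε₂ log(2N/δ)))) each hold with probability at least 1 − δ/(2N), and on their joint intersection for t ∈ (kΔt,(k+1)Δt)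 one has ‖X_t − x_t‖ ≤ ‖X_{kΔt} − x_{kΔt}‖ + ‖X_t − x̄_{t,k}‖ by contractivity. Then P(‖X_t − x_t‖ ≤ σ(sqrt((L^{2t}−1)/(L²−1)) + sqrt((L^{−2(Δt−1)}−1)/(L^{−2}−1)))·sqrt(ε₁n + ε₂ log(2T/(δΔt))) for all t ≤ T) ≥ 1 − δ. -/
open MeasureTheory Real

/-- Modified probabilistic tube for contractive discrete-time systems
(union-bound combination step): given the per-endpoint events `F_k^{(1)}` and
per-interval events `F_k^{(2)}`, each of probability at least `1 − δ/(2N)`,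
and the triangle/contractivity estimate on their intersection, the trajectory
stays in the combined tube with probability at least `1 − δ`. -/
theorem modified_probabilistic_tube_DT_contractive
    {n : ℕ} {Ω : Type*} [MeasurableSpace Ω] (μ : Measure Ω) [IsProbabilityMeasure μ]
    (L σ δ ε : ℝ) (hL : L ∈ Set.Ioo (0 : ℝ) 1) (hσ : 0 < σ)
    (hδ : δ ∈ Set.Ioo (0 : ℝ) 1) (hε : ε ∈ Set.Ioo (0 : ℝ) 1)
    (T Δt N : ℕ) (hT : 0 < T) (hΔ1 : 1 ≤ Δt) (hΔT : Δt ≤ T)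
    (hN : 0 < N) (hdiv : T = N * Δt)
    (ε₁ ε₂ : ℝ)
    (hε₁ : ε₁ = Real.log (1 / (1 - ε ^ 2)) / ε ^ 2) (hε₂ : ε₂ = 2 / ε ^ 2)
    (X : ℕ → Ω → EuclideanSpace ℝ (Fin n)) (x : ℕ → EuclideanSpace ℝ (Fin n))
    (xbar : ℕ → ℕ → Ω → EuclideanSpace ℝ (Fin n))
    (hX0 : ∀ ω, X 0 ω = x 0)
    (rk : ℕ → ℝ)
    (hrk : ∀ k, rk k = σ * Real.sqrt
      (((L ^ (2 * (k * Δt)) - 1) / (L ^ 2 - 1)) * (ε₁ * n + ε₂ * Real.log (2 * N / δ))))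
    (rΔ : ℝ)
    (hrΔ : rΔ = σ * Real.sqrt
      (((L ^ (-2 * ((Δt : ℤ) - 1)) - 1) / (L ^ (-2 : ℤ) - 1))
        * (ε₁ * n + ε₂ * Real.log (2 * N / δ))))
    (hF1m : ∀ k, MeasurableSet {ω | ‖X (k * Δt) ω - x (k * Δt)‖ ≤ rk k})
    (hF2m : ∀ k, MeasurableSet {ω | ∀ t, k * Δt < t → t < (k + 1) * Δt →
      ‖X t ω - xbar k t ω‖ ≤ rΔ})
    (hF1 : ∀ k, 1 ≤ k → k ≤ N →
      1 - δ / (2 * N) ≤ (μ {ω | ‖X (k * Δt) ω - x (k * Δt)‖ ≤ rk k}).toReal)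
    (hF2 : ∀ k, k < N →
      1 - δ / (2 * N) ≤ (μ {ω | ∀ t, k * Δt < t → t < (k + 1) * Δt →
        ‖X t ω - xbar k t ω‖ ≤ rΔ}).toReal)
    (htri : ∀ ω, ∀ k < N, ∀ t, k * Δt < t → t < (k + 1) * Δt →
      ‖X t ω - x t‖ ≤ ‖X (k * Δt) ω - x (k * Δt)‖ + ‖X t ω - xbar k t ω‖) :
    1 - δ ≤ (μ {ω | ∀ t ≤ T,
        ‖X t ω - x t‖ ≤ σ * (Real.sqrt ((L ^ (2 * t) - 1) / (L ^ 2 - 1))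
            + Real.sqrt ((L ^ (-2 * ((Δt : ℤ) - 1)) - 1) / (L ^ (-2 : ℤ) - 1)))
          * Real.sqrt (ε₁ * n + ε₂ * Real.log (2 * T / (δ * Δt)))}).toReal := by
  obtain ⟨hL0, hL1⟩ := hL
  obtain ⟨hδ0, hδ1⟩ := hδ
  obtain ⟨hε0, hε1⟩ := hε
  have hΔ0 : 0 < Δt := hΔ1
  have hΔ0' : (0:ℝ) < (Δt:ℝ) := by exact_mod_cast hΔ0
  have hN0' : (0:ℝ) < (N:ℝ) := by exact_mod_cast hN
  set S : ℝ := ε₁ * n + ε₂ * Real.log (2 * N / δ) with hSdef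
  -- the two logarithms coincide since T = N * Δt
  have hlogeq : Real.log (2 * T / (δ * Δt)) = Real.log (2 * N / δ) := by
    congr 1
    rw [hdiv]
    push_cast
    field_simp
  -- positivity of S
  have hS0 : 0 ≤ S := by
    have hε2pos : (0:ℝ) < ε ^ 2 := by positivity
    have h1e : ε ^ 2 < 1 := by nlinarith
    have hε₁0 : 0 ≤ ε₁ := by
      rw [hε₁]
      apply div_nonneg _ hε2pos.le
      apply Real.log_nonneg
      rw [le_div_iff₀ (by linarith)]
      linarith
    have hε₂0 : 0 ≤ ε₂ := by rw [hε₂]; positivity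
    have hlog0 : 0 ≤ Real.log (2 * N / δ) := by
      apply Real.log_nonneg
      rw [le_div_iff₀ hδ0]
      have : (1:ℝ) ≤ (N:ℝ) := by exact_mod_cast hN
      nlinarith
    have : (0:ℝ) ≤ (n:ℝ) := Nat.cast_nonneg n
    positivity
  -- nonnegativity and monotonicity of the A-coefficient
  have eflip : ∀ u : ℕ, (L ^ (2 * u) - 1) / (L ^ 2 - 1) = (1 - L ^ (2 * u)) / (1 - L ^ 2) := by
    intro u
    rw [show L ^ (2 * u) - 1 = -(1 - L ^ (2 * u)) by ring,
      show L ^ 2 - 1 = -(1 - L ^ 2) by ring, neg_div_neg_eq]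
  have hL2lt : L ^ 2 < 1 := by nlinarith
  have hA0 : ∀ u : ℕ, 0 ≤ (L ^ (2 * u) - 1) / (L ^ 2 - 1) := by
    intro u
    rw [eflip]
    have : L ^ (2 * u) ≤ 1 := pow_le_one₀ hL0.le hL1.le
    apply div_nonneg <;> linarith
  have hAmono : ∀ u v : ℕ, u ≤ v →
      (L ^ (2 * u) - 1) / (L ^ 2 - 1) ≤ (L ^ (2 * v) - 1) / (L ^ 2 - 1) := by
    intro u v huv
    have h1 : L ^ (2 * v) ≤ L ^ (2 * u) :=
      pow_le_pow_of_le_one hL0.le hL1.le (by omega)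
    rw [eflip, eflip]
    gcongr
  -- nonnegativity of the B-coefficient
  have hB0 : 0 ≤ (L ^ (-2 * ((Δt : ℤ) - 1)) - 1) / (L ^ (-2 : ℤ) - 1) := by
    have hnum : (1:ℝ) ≤ L ^ (-2 * ((Δt : ℤ) - 1)) := by
      have e1 : L ^ (-2 * ((Δt : ℤ) - 1)) = (L ^ (2 * (Δt - 1)) : ℝ)⁻¹ := by
        rw [← zpow_natCast L (2 * (Δt - 1)), ← zpow_neg]
        congr 1
        push_cast [hΔ1]
        ring
      rw [e1]
      exact (one_le_inv₀ (pow_pos hL0 _)).mpr (pow_le_one₀ hL0.le hL1.le)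
    have hden : (0:ℝ) < L ^ (-2 : ℤ) - 1 := by
      have he : L ^ (-2 : ℤ) = ((L ^ 2 : ℝ))⁻¹ := by
        rw [zpow_neg, zpow_two, sq]
      rw [he]
      have := (one_lt_inv₀ (by positivity : (0:ℝ) < L ^ 2)).mpr hL2lt
      linarith
    exact div_nonneg (by linarith) hden.le
  -- abbreviations for the events
  set F1 : ℕ → Set Ω := fun k => {ω | ‖X (k * Δt) ω - x (k * Δt)‖ ≤ rk k} with hF1def
  set F2 : ℕ → Set Ω := fun k => {ω | ∀ t, k * Δt < t → t < (k + 1) * Δt →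
      ‖X t ω - xbar k t ω‖ ≤ rΔ} with hF2def
  set G : Set Ω := (⋂ k ∈ Finset.Icc 1 N, F1 k) ∩ (⋂ k ∈ Finset.range N, F2 k) with hGdef
  have hGm : MeasurableSet G := by
    apply MeasurableSet.inter
    · exact (Finset.Icc 1 N).measurableSet_biInter (fun k _ => hF1m k)
    · exact (Finset.range N).measurableSet_biInter (fun k _ => hF2m k)
  -- the pointwise inclusion
  have hrk_le : ∀ k u : ℕ, k * Δt ≤ u →
      rk k ≤ σ * Real.sqrt ((L ^ (2 * u) - 1) / (L ^ 2 - 1)) * Real.sqrt S := by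
    intro k u hku
    rw [hrk, Real.sqrt_mul (hA0 _), ← mul_assoc]
    have h1 : Real.sqrt ((L ^ (2 * (k * Δt)) - 1) / (L ^ 2 - 1)) ≤
        Real.sqrt ((L ^ (2 * u) - 1) / (L ^ 2 - 1)) :=
      Real.sqrt_le_sqrt (hAmono _ _ hku)
    exact mul_le_mul_of_nonneg_right (mul_le_mul_of_nonneg_left h1 hσ.le)
      (Real.sqrt_nonneg S)
  have hrΔ_eq : rΔ = σ * Real.sqrt ((L ^ (-2 * ((Δt : ℤ) - 1)) - 1) / (L ^ (-2 : ℤ) - 1))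
      * Real.sqrt S := by
    rw [hrΔ, Real.sqrt_mul hB0, ← mul_assoc]
  have hsub : G ⊆ {ω | ∀ t ≤ T,
      ‖X t ω - x t‖ ≤ σ * (Real.sqrt ((L ^ (2 * t) - 1) / (L ^ 2 - 1))
          + Real.sqrt ((L ^ (-2 * ((Δt : ℤ) - 1)) - 1) / (L ^ (-2 : ℤ) - 1)))
        * Real.sqrt (ε₁ * n + ε₂ * Real.log (2 * T / (δ * Δt)))} := by
    intro ω hω
    obtain ⟨hωA, hωB⟩ := hω
    simp only [Set.mem_iInter, Finset.mem_Icc, Finset.mem_range] at hωA hωB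
    intro t ht
    rw [show ε₁ * n + ε₂ * Real.log (2 * T / (δ * Δt)) = S by rw [hSdef, hlogeq]]
    -- the F1 bounds hold for all k ≤ N (k = 0 is trivial)
    have hF1all : ∀ k ≤ N, ‖X (k * Δt) ω - x (k * Δt)‖ ≤ rk k := by
      intro k hk
      rcases Nat.eq_zero_or_pos k with rfl | hk1
      · simp only [Nat.zero_mul, hX0 ω, sub_self, norm_zero]
        rw [hrk]
        positivity
      · exact hωA k ⟨hk1, hk⟩
    set k := t / Δt with hkdef
    have hk1 : k * Δt ≤ t := Nat.div_mul_le_self t Δt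
    have hk2 : t < (k + 1) * Δt := by
      calc t = Δt * k + t % Δt := (Nat.div_add_mod t Δt).symm
        _ < Δt * k + Δt := by have := Nat.mod_lt t hΔ0; omega
        _ = (k + 1) * Δt := by ring
    have hrhs : σ * (Real.sqrt ((L ^ (2 * t) - 1) / (L ^ 2 - 1))
          + Real.sqrt ((L ^ (-2 * ((Δt : ℤ) - 1)) - 1) / (L ^ (-2 : ℤ) - 1)))
        * Real.sqrt S
        = σ * Real.sqrt ((L ^ (2 * t) - 1) / (L ^ 2 - 1)) * Real.sqrt S
          + σ * Real.sqrt ((L ^ (-2 * ((Δt : ℤ) - 1)) - 1) / (L ^ (-2 : ℤ) - 1))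
            * Real.sqrt S := by ring
    rcases eq_or_lt_of_le hk1 with heq | hlt
    · -- t is an endpoint
      have hkN : k ≤ N := by
        have h5 : k * Δt ≤ N * Δt := by rw [heq, ← hdiv]; exact ht
        exact Nat.le_of_mul_le_mul_right h5 hΔ0
      have h1 : ‖X t ω - x t‖ ≤ rk k := by rw [← heq]; exact hF1all k hkN
      have h2 : rk k ≤ σ * Real.sqrt ((L ^ (2 * t) - 1) / (L ^ 2 - 1)) * Real.sqrt S :=
        hrk_le k t hk1
      rw [hrhs]
      have h3 : 0 ≤ σ * Real.sqrt ((L ^ (-2 * ((Δt : ℤ) - 1)) - 1) / (L ^ (-2 : ℤ) - 1))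
          * Real.sqrt S := by positivity
      linarith
    · -- t lies strictly inside the interval
      have hkN : k < N := by
        by_contra hcon
        push_neg at hcon
        have : N * Δt ≤ k * Δt := Nat.mul_le_mul_right _ hcon
        omega
      have h1 : ‖X (k * Δt) ω - x (k * Δt)‖ ≤ rk k := hF1all k hkN.le
      have h2 : ‖X t ω - xbar k t ω‖ ≤ rΔ := hωB k hkN t hlt hk2
      have h3 := htri ω k hkN t hlt hk2
      have h4 : rk k ≤ σ * Real.sqrt ((L ^ (2 * t) - 1) / (L ^ 2 - 1)) * Real.sqrt S :=
        hrk_le k t hk1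
      rw [hrhs, ← hrΔ_eq]
      linarith
  -- probability bound via the union bound
  have hcompl : ∀ (s : Set Ω), MeasurableSet s → (μ sᶜ).toReal = 1 - (μ s).toReal := by
    intro s hs
    rw [prob_compl_eq_one_sub hs, ENNReal.toReal_sub_of_le prob_le_one ENNReal.one_ne_top]
    simp
  have hbound : ∀ (s : Set Ω), MeasurableSet s →
      (1 - δ / (2 * N) ≤ (μ s).toReal) → μ sᶜ ≤ ENNReal.ofReal (δ / (2 * N)) := by
    intro s hs h
    have h1 : (μ sᶜ).toReal ≤ δ / (2 * N) := by rw [hcompl s hs]; linarith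
    calc μ sᶜ = ENNReal.ofReal ((μ sᶜ).toReal) := (ENNReal.ofReal_toReal (measure_ne_top μ _)).symm
      _ ≤ ENNReal.ofReal (δ / (2 * N)) := ENNReal.ofReal_le_ofReal h1
  have hGc : μ Gᶜ ≤ ENNReal.ofReal δ := by
    have hA : μ (⋂ k ∈ Finset.Icc 1 N, F1 k)ᶜ ≤ (N : ENNReal) * ENNReal.ofReal (δ / (2 * N)) := by
      rw [Set.compl_iInter₂]
      calc μ (⋃ k ∈ Finset.Icc 1 N, (F1 k)ᶜ)
          ≤ ∑ k ∈ Finset.Icc 1 N, μ (F1 k)ᶜ := measure_biUnion_finset_le _ _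
        _ ≤ ∑ k ∈ Finset.Icc 1 N, ENNReal.ofReal (δ / (2 * N)) := by
            apply Finset.sum_le_sum
            intro k hk
            rw [Finset.mem_Icc] at hk
            exact hbound _ (hF1m k) (hF1 k hk.1 hk.2)
        _ = (N : ENNReal) * ENNReal.ofReal (δ / (2 * N)) := by
            rw [Finset.sum_const, Nat.card_Icc]
            simp [nsmul_eq_mul]
    have hB : μ (⋂ k ∈ Finset.range N, F2 k)ᶜ ≤ (N : ENNReal) * ENNReal.ofReal (δ / (2 * N)) := by
      rw [Set.compl_iInter₂]
      calc μ (⋃ k ∈ Finset.range N, (F2 k)ᶜ)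
          ≤ ∑ k ∈ Finset.range N, μ (F2 k)ᶜ := measure_biUnion_finset_le _ _
        _ ≤ ∑ k ∈ Finset.range N, ENNReal.ofReal (δ / (2 * N)) := by
            apply Finset.sum_le_sum
            intro k hk
            rw [Finset.mem_range] at hk
            exact hbound _ (hF2m k) (hF2 k hk)
        _ = (N : ENNReal) * ENNReal.ofReal (δ / (2 * N)) := by
            rw [Finset.sum_const, Finset.card_range]
            simp [nsmul_eq_mul]
    calc μ Gᶜ = μ ((⋂ k ∈ Finset.Icc 1 N, F1 k)ᶜ ∪ (⋂ k ∈ Finset.range N, F2 k)ᶜ) := by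
          rw [hGdef, Set.compl_inter]
      _ ≤ μ (⋂ k ∈ Finset.Icc 1 N, F1 k)ᶜ + μ (⋂ k ∈ Finset.range N, F2 k)ᶜ :=
          measure_union_le _ _
      _ ≤ (N : ENNReal) * ENNReal.ofReal (δ / (2 * N)) + (N : ENNReal) * ENNReal.ofReal (δ / (2 * N)) :=
          add_le_add hA hB
      _ = ENNReal.ofReal δ := by
          have hval : (N : ENNReal) * ENNReal.ofReal (δ / (2 * N)) = ENNReal.ofReal (δ / 2) := by
            rw [← ENNReal.ofReal_natCast N, ← ENNReal.ofReal_mul (Nat.cast_nonneg N)]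
            congr 1
            field_simp
          rw [hval, ← ENNReal.ofReal_add (by positivity) (by positivity)]
          norm_num
  have hGtoReal : 1 - δ ≤ (μ G).toReal := by
    have h1 : (μ Gᶜ).toReal ≤ δ := by
      calc (μ Gᶜ).toReal ≤ (ENNReal.ofReal δ).toReal :=
            ENNReal.toReal_mono ENNReal.ofReal_ne_top hGc
        _ = δ := ENNReal.toReal_ofReal hδ0.le
    have h2 := hcompl G hGm
    linarith [hcompl Gᶜ hGm.compl, (by rw [compl_compl] : μ Gᶜᶜ = μ G)]
  calc 1 - δ ≤ (μ G).toReal := hGtoReal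
    _ ≤ _ := by
        apply ENNReal.toReal_mono (measure_ne_top μ _)
        exact measure_mono hsub
end
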